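/- arXiv:1403.1235 — 8 statements merged into one kernel-verified Lean document; each statement's English description precedes it below -/
import Mathlib

section
/- Let σ ∈ ℂ with 2σ ∉ ℤ. Then the conformal block series B(σ,t) = Σ_{λ,μ∈𝕐} (dim λ · dim μ / (|λ|! |μ|!))² t^{|λ|+|μ|} / b_{λ,μ}(σ)² converges absolutely for every t ∈ ℂ, and the convergence is uniform on every bounded subset of ℂ. -/
open scoped BigOperators

/-- The number of standard Young tableaux of shape `μ`: bijective labelings of the
cells of `μ` by `{0, …, |μ|-1}` that are monotone for the product (componentwise)
order on cells. -/
noncomputable def dimSYT (μ : YoungDiagram) : ℕ :=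
  Nat.card {T : {c // c ∈ μ.cells} ≃ Fin μ.card //
    ∀ c d : {c // c ∈ μ.cells},
      (c : ℕ × ℕ).1 ≤ (d : ℕ × ℕ).1 → (c : ℕ × ℕ).2 ≤ (d : ℕ × ℕ).2 → T c ≤ T d}

/-- `b_{λ,μ}(σ) = ∏_{(k,l)∈λ}(λ'_l − k + μ_k − l + 1 + 2σ) ·
∏_{(k,l)∈μ}(μ'_l − k + λ_k − l + 1 − 2σ)`, written in 0-based coordinates. -/
noncomputable def bFactor (l m : YoungDiagram) (σ : ℂ) : ℂ :=
  (∏ c ∈ l.cells, ((l.colLen c.2 : ℂ) - c.1 + m.rowLen c.1 - c.2 - 1 + 2 * σ)) *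
  (∏ c ∈ m.cells, ((m.colLen c.2 : ℂ) - c.1 + l.rowLen c.1 - c.2 - 1 - 2 * σ))

/-- The general term of the conformal block series `B(σ,t)`. -/
noncomputable def blockTerm (σ t : ℂ) (p : YoungDiagram × YoungDiagram) : ℂ :=
  ((dimSYT p.1 * dimSYT p.2 : ℂ) / ((Nat.factorial p.1.card) * (Nat.factorial p.2.card))) ^ 2
    * t ^ (p.1.card + p.2.card) / (bFactor p.1 p.2 σ) ^ 2

lemma fract_min_le_abs (z : ℝ) : min (Int.fract z) (1 - Int.fract z) ≤ |z| := by
  rcases le_or_gt 0 (⌊z⌋ : ℝ) with h | h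
  · refine le_trans (min_le_left _ _) ?_
    rw [abs_of_nonneg (by nlinarith [Int.fract_nonneg z, Int.self_sub_fract z])]
    nlinarith [Int.self_sub_fract z]
  · refine le_trans (min_le_right _ _) ?_
    have h1 : (⌊z⌋ : ℝ) ≤ -1 := by
      have : ⌊z⌋ < 0 := by exact_mod_cast h
      exact_mod_cast Int.le_of_lt_add_one (by omega : ⌊z⌋ < -1 + 1)
    have hz : z ≤ Int.fract z - 1 := by nlinarith [Int.self_sub_fract z]
    have : 1 - Int.fract z ≤ -z := by linarith
    calc 1 - Int.fract z ≤ -z := this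
    _ ≤ |z| := neg_le_abs z

lemma delta_spec (σ : ℂ) (hσ : ∀ n : ℤ, 2 * σ ≠ (n : ℂ)) :
    ∃ δ : ℝ, 0 < δ ∧ ∀ A : ℤ, δ ≤ ‖(A : ℂ) + 2 * σ‖ := by
  set x := (2 * σ).re with hx
  refine ⟨max |(2 * σ).im| (min (Int.fract x) (1 - Int.fract x)), ?_, ?_⟩
  · rcases lt_or_ge 0 |(2 * σ).im| with h | h
    · exact lt_max_of_lt_left h
    · have him : (2 * σ).im = 0 := by
        have := abs_nonneg ((2 * σ).im); have := abs_eq_zero.mp (le_antisymm h this)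
        exact this
      have hfr : Int.fract x ≠ 0 := by
        intro h0
        apply hσ ⌊x⌋
        have : x = (⌊x⌋ : ℝ) := by have := Int.self_sub_fract x; rw [h0] at this; linarith
        apply Complex.ext
        · rw [Complex.intCast_re, ← hx]; exact this
        · rw [Complex.intCast_im, him]
      have h1 : 0 < Int.fract x := lt_of_le_of_ne (Int.fract_nonneg x) (Ne.symm hfr)
      have h2 : Int.fract x < 1 := Int.fract_lt_one x
      exact lt_max_of_lt_right (lt_min h1 (by linarith))
  · intro A
    apply max_le
    · calc |(2 * σ).im| = |((A : ℂ) + 2 * σ).im| := by simp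
      _ ≤ ‖(A : ℂ) + 2 * σ‖ := Complex.abs_im_le_norm _
    · have : min (Int.fract x) (1 - Int.fract x) ≤ |((A : ℂ) + 2 * σ).re| := by
        have hre : ((A : ℂ) + 2 * σ).re = (A : ℝ) + x := by simp [hx]
        rw [hre]
        have : Int.fract ((A : ℝ) + x) = Int.fract x := Int.fract_intCast_add A x
        calc min (Int.fract x) (1 - Int.fract x)
            = min (Int.fract ((A:ℝ) + x)) (1 - Int.fract ((A:ℝ)+x)) := by rw [this]
        _ ≤ |(A:ℝ) + x| := fract_min_le_abs _
      exact this.trans (Complex.abs_re_le_norm _)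

lemma bFactor_norm_ge (l m : YoungDiagram) (σ : ℂ) (δ : ℝ) (hδ0 : 0 ≤ δ)
    (hδ : ∀ A : ℤ, δ ≤ ‖(A : ℂ) + 2 * σ‖) :
    δ ^ (l.card + m.card) ≤ ‖bFactor l m σ‖ := by
  rw [bFactor, norm_mul, pow_add]
  gcongr
  · rw [norm_prod]
    calc δ ^ l.card = ∏ c ∈ l.cells, δ := by rw [Finset.prod_const]
    _ ≤ _ := by
        apply Finset.prod_le_prod (fun _ _ => hδ0)
        intro c _
        have : ((l.colLen c.2 : ℂ) - c.1 + m.rowLen c.1 - c.2 - 1 + 2 * σ)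
            = (((l.colLen c.2 : ℤ) - c.1 + m.rowLen c.1 - c.2 - 1 : ℤ) : ℂ) + 2 * σ := by
          push_cast; ring
        rw [this]; exact hδ _
  · rw [norm_prod]
    calc δ ^ m.card = ∏ c ∈ m.cells, δ := by rw [Finset.prod_const]
    _ ≤ _ := by
        apply Finset.prod_le_prod (fun _ _ => hδ0)
        intro c _
        have : ((m.colLen c.2 : ℂ) - c.1 + l.rowLen c.1 - c.2 - 1 - 2 * σ)
            = -((((- (m.colLen c.2 : ℤ) + c.1 - l.rowLen c.1 + c.2 + 1) : ℤ) : ℂ) + 2 * σ) := by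
          push_cast; ring
        rw [this, norm_neg]; exact hδ _

def piSuccEquiv (L : ℕ) : (Fin (L + 1) → ℕ) ≃ ℕ × (Fin L → ℕ) where
  toFun v := (v 0, fun i => v i.succ)
  invFun p := Fin.cons p.1 p.2
  left_inv v := funext fun i => Fin.cases rfl (fun j => rfl) i
  right_inv p := by
    ext x
    · rfl
    · simp

lemma pi_summable (w : ℕ → ℝ) (hw : ∀ j, 0 ≤ w j) (hsw : Summable w) :
    ∀ L : ℕ, Summable (fun v : Fin L → ℕ => ∏ k, w (v k)) ∧
      (∑' v : Fin L → ℕ, ∏ k, w (v k)) = (∑' j, w j) ^ L := by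
  intro L
  induction L with
  | zero =>
    have h1 : (fun v : Fin 0 → ℕ => ∏ k, w (v k)) = fun _ => 1 := by
      funext v; simp
    constructor
    · rw [h1]; exact summable_of_finite_support (Set.toFinite _)
    · rw [h1, pow_zero, tsum_eq_single default (fun b hb => absurd (Subsingleton.elim b _) hb)]
  | succ L IH =>
    have hg : Summable (fun p : ℕ × (Fin L → ℕ) => w p.1 * ∏ k, w (p.2 k)) :=
      Summable.mul_of_nonneg (f := w) (g := fun v : Fin L → ℕ => ∏ k, w (v k))
        hsw IH.1 (fun j => hw j) (fun v => Finset.prod_nonneg fun k _ => hw _)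
    have hcomp : (fun v : Fin (L+1) → ℕ => ∏ k, w (v k))
        = (fun p : ℕ × (Fin L → ℕ) => w p.1 * ∏ k, w (p.2 k)) ∘ (piSuccEquiv L) := by
      funext v
      simp only [Function.comp_apply, piSuccEquiv, Equiv.coe_fn_mk]
      exact Fin.prod_univ_succ _
    constructor
    · rw [hcomp]; exact hg.comp_injective (piSuccEquiv L).injective
    · rw [hcomp]
      have htr : tsum ((fun p : ℕ × (Fin L → ℕ) => w p.1 * ∏ k, w (p.2 k)) ∘ (piSuccEquiv L))
          = ∑' p : ℕ × (Fin L → ℕ), w p.1 * ∏ k, w (p.2 k) :=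
        (piSuccEquiv L).tsum_eq (fun p : ℕ × (Fin L → ℕ) => w p.1 * ∏ k, w (p.2 k))
      rw [htr]
      have hnorm1 : Summable fun j => ‖w j‖ := by
        simpa only [Real.norm_eq_abs, abs_of_nonneg (hw _)] using hsw
      have hnorm2 : Summable fun v : Fin L → ℕ => ‖∏ k, w (v k)‖ := by
        simpa only [Real.norm_eq_abs,
          abs_of_nonneg (Finset.prod_nonneg fun k _ => hw _)] using IH.1
      rw [← tsum_mul_tsum_of_summable_norm (f := w)
        (g := fun v : Fin L → ℕ => ∏ k, w (v k)) hnorm1 hnorm2, IH.2, pow_succ]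
      ring

lemma count_aux {α : Type} [Fintype α] [DecidableEq α] {n L : ℕ} {r : Fin L → ℕ}
    (e : α ≃ Σ i : Fin L, Fin (r i)) (hn : Fintype.card α = n)
    (Q : (α ≃ Fin n) → Prop)
    (hQ : ∀ T, Q T → ∀ (i : Fin L) (j j' : Fin (r i)), j ≤ j' →
      T (e.symm ⟨i, j⟩) ≤ T (e.symm ⟨i, j'⟩)) :
    Nat.card {T : α ≃ Fin n // Q T} * ∏ i, Nat.factorial (r i) ≤ Nat.factorial n := by
  classical
  set Φ : {T : α ≃ Fin n // Q T} × (Π i, Equiv.Perm (Fin (r i))) → (α ≃ Fin n) :=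
    fun p => e.trans ((Equiv.sigmaCongrRight p.2).trans (e.symm.trans p.1.val)) with hΦdef
  have hΦ : Function.Injective Φ := by
    rintro ⟨⟨T, hT⟩, g⟩ ⟨⟨T', hT'⟩, g'⟩ h
    have hkey : ∀ x : Σ i, Fin (r i),
        T (e.symm (Equiv.sigmaCongrRight g x)) = T' (e.symm (Equiv.sigmaCongrRight g' x)) := by
      intro x
      have := congrArg (fun E : α ≃ Fin n => E (e.symm x)) h
      simpa [Φ, Equiv.trans_apply] using this
    have hg : g = g' := by
      funext i
      have hφmono : StrictMono (fun j : Fin (r i) => T (e.symm ⟨i, j⟩)) := by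
        apply Monotone.strictMono_of_injective
        · intro a b hab; exact hQ T hT i a b hab
        · intro a b hab
          have h4 : (⟨i, a⟩ : Σ i, Fin (r i)) = ⟨i, b⟩ := e.symm.injective (T.injective hab)
          exact sigma_mk_injective (β := fun i => Fin (r i)) h4
      have hφ'mono : StrictMono (fun j : Fin (r i) => T' (e.symm ⟨i, j⟩)) := by
        apply Monotone.strictMono_of_injective
        · intro a b hab; exact hQ T' hT' i a b hab
        · intro a b hab
          have h4 : (⟨i, a⟩ : Σ i, Fin (r i)) = ⟨i, b⟩ := e.symm.injective (T'.injective hab)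
          exact sigma_mk_injective (β := fun i => Fin (r i)) h4
      set k : Fin (r i) ≃ Fin (r i) := (g i).symm.trans (g' i) with hkdef
      have hcomm : ∀ j, T (e.symm ⟨i, j⟩) = T' (e.symm ⟨i, k j⟩) := by
        intro j
        have := hkey ⟨i, (g i).symm j⟩
        simpa [k, Equiv.sigmaCongrRight] using this
      have hkmono : StrictMono (⇑k) := by
        intro a b hab
        refine hφ'mono.lt_iff_lt.mp ?_
        show T' (e.symm ⟨i, k a⟩) < T' (e.symm ⟨i, k b⟩)
        rw [← hcomm a, ← hcomm b]
        exact hφmono hab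
      haveI : WellFoundedLT (Fin (r i)) := Finite.to_wellFoundedLT
      have hkid : ⇑k = id :=
        (hkmono.range_inj strictMono_id).1 (by rw [Equiv.range_eq_univ, Set.range_id])
      apply Equiv.ext; intro j
      have h3 := congrFun hkid (g i j)
      simpa [k] using h3.symm
    subst hg
    have hTT : T = T' := by
      apply Equiv.ext; intro a
      have := hkey ((Equiv.sigmaCongrRight g).symm (e a))
      simpa using this
    simp [hTT]
  have key := Nat.card_le_card_of_injective Φ hΦ
  rw [Nat.card_prod, Nat.card_pi] at key
  have h1 : Nat.card {T : α ≃ Fin n // Q T} * ∏ i, Nat.factorial (r i)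
      = Nat.card {T : α ≃ Fin n // Q T} * ∏ i, Nat.card (Equiv.Perm (Fin (r i))) := by
    congr 1
    exact Finset.prod_congr rfl fun i _ => by
      rw [Nat.card_eq_fintype_card, Fintype.card_perm, Fintype.card_fin]
  rw [h1]
  refine key.trans ?_
  rw [Nat.card_eq_fintype_card, Fintype.card_equiv (Fintype.equivFinOfCardEq hn), hn]

def rowEquiv (μ : YoungDiagram) :
    {c // c ∈ μ.cells} ≃ Σ i : Fin (μ.colLen 0), Fin (μ.rowLen i) where
  toFun c := ⟨⟨(c : ℕ × ℕ).1,
      lt_of_lt_of_le (YoungDiagram.mem_iff_lt_colLen.mp ((μ.mem_cells _).mp c.2))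
        (μ.colLen_anti 0 _ (Nat.zero_le _))⟩,
    ⟨(c : ℕ × ℕ).2, YoungDiagram.mem_iff_lt_rowLen.mp ((μ.mem_cells _).mp c.2)⟩⟩
  invFun x := ⟨(x.1.val, x.2.val),
    (μ.mem_cells _).mpr (YoungDiagram.mem_iff_lt_rowLen.mpr x.2.isLt)⟩
  left_inv c := Subtype.ext rfl
  right_inv x := rfl

def colEquiv (μ : YoungDiagram) :
    {c // c ∈ μ.cells} ≃ Σ l : Fin (μ.rowLen 0), Fin (μ.colLen l) where
  toFun c := ⟨⟨(c : ℕ × ℕ).2,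
      lt_of_lt_of_le (YoungDiagram.mem_iff_lt_rowLen.mp ((μ.mem_cells _).mp c.2))
        (μ.rowLen_anti 0 _ (Nat.zero_le _))⟩,
    ⟨(c : ℕ × ℕ).1, YoungDiagram.mem_iff_lt_colLen.mp ((μ.mem_cells _).mp c.2)⟩⟩
  invFun x := ⟨(x.2.val, x.1.val),
    (μ.mem_cells _).mpr (YoungDiagram.mem_iff_lt_colLen.mpr x.2.isLt)⟩
  left_inv c := Subtype.ext rfl
  right_inv x := rfl

lemma card_eq_sum_rowLens (μ : YoungDiagram) :
    ∑ i : Fin (μ.colLen 0), μ.rowLen i = μ.card := by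
  have := Fintype.card_congr (rowEquiv μ)
  rw [Fintype.card_coe, Fintype.card_sigma] at this
  simpa using this.symm


lemma dim_mul_rows (μ : YoungDiagram) :
    dimSYT μ * ∏ i : Fin (μ.colLen 0), Nat.factorial (μ.rowLen i) ≤ Nat.factorial μ.card :=
  count_aux (rowEquiv μ) (Fintype.card_coe _) _
    (fun T hT i j j' hjj' => hT _ _ (le_refl _) hjj')

lemma dim_mul_cols (μ : YoungDiagram) :
    dimSYT μ * ∏ l : Fin (μ.rowLen 0), Nat.factorial (μ.colLen l) ≤ Nat.factorial μ.card :=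
  count_aux (colEquiv μ) (Fintype.card_coe _) _
    (fun T hT l i i' hii' => hT _ _ hii' (le_refl _))


noncomputable def sigF (q : ℝ) : (Σ L : ℕ, (Fin L → ℕ)) → ℝ := fun x =>
  (1 / (Nat.factorial x.1 : ℝ)) * ∏ k, (q ^ (x.2 k) / (Nat.factorial (x.2 k) : ℝ))

def iotaYD (μ : YoungDiagram) : Σ L : ℕ, (Fin L → ℕ) :=
  ⟨μ.colLen 0, fun i => μ.rowLen i⟩

noncomputable def mMaj (q : ℝ) (μ : YoungDiagram) : ℝ :=
  (1 / ((μ.colLen 0).factorial : ℝ)) *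
    ∏ i : Fin (μ.colLen 0), (q ^ (μ.rowLen i) / ((μ.rowLen i).factorial : ℝ))

lemma sigma_summable (q : ℝ) (hq : 0 ≤ q) : Summable (sigF q) := by
  set w : ℕ → ℝ := fun j => q ^ j / (Nat.factorial j : ℝ) with hwdef
  have hw0 : ∀ j, 0 ≤ w j := fun j => div_nonneg (pow_nonneg hq j) (Nat.cast_nonneg _)
  have hsw : Summable w := Real.summable_pow_div_factorial q
  apply (summable_sigma_of_nonneg ?_).mpr
  · constructor
    · intro L
      show Summable (fun v : Fin L → ℕ => (1 / (Nat.factorial L : ℝ)) * ∏ k, w (v k))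
      exact ((pi_summable w hw0 hsw L).1.mul_left _)
    · apply Summable.congr (f := fun L : ℕ => ((∑' j, w j) ^ L / (Nat.factorial L : ℝ)))
      · exact Real.summable_pow_div_factorial _
      · intro L
        show (∑' j, w j) ^ L / (Nat.factorial L : ℝ)
            = ∑' v : Fin L → ℕ, (1 / (Nat.factorial L : ℝ)) * ∏ k, w (v k)
        rw [tsum_mul_left, (pi_summable w hw0 hsw L).2]
        ring
  · intro x
    show 0 ≤ (1 / (Nat.factorial x.1 : ℝ)) * ∏ k, (q ^ (x.2 k) / (Nat.factorial (x.2 k) : ℝ))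
    exact mul_nonneg (by positivity) (Finset.prod_nonneg fun k _ => hw0 _)

lemma rowLen_ext {μ ν : YoungDiagram} (h : ∀ k, μ.rowLen k = ν.rowLen k) : μ = ν := by
  ext ⟨i, j⟩
  rw [YoungDiagram.mem_cells, YoungDiagram.mem_cells, YoungDiagram.mem_iff_lt_rowLen,
    YoungDiagram.mem_iff_lt_rowLen, h i]

lemma iota_injective : Function.Injective iotaYD := by
  intro μ ν h
  rw [iotaYD, iotaYD, Sigma.mk.inj_iff] at h
  obtain ⟨h1, h2⟩ := h
  have h3 := (Fin.heq_fun_iff h1).mp h2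
  apply rowLen_ext
  intro k
  by_cases hk : k < μ.colLen 0
  · exact h3 ⟨k, hk⟩
  · have hk' : ¬ k < ν.colLen 0 := by rw [← h1]; exact hk
    have e1 : (k, 0) ∉ μ := fun hm => hk (YoungDiagram.mem_iff_lt_colLen.mp hm)
    have e2 : (k, 0) ∉ ν := fun hm => hk' (YoungDiagram.mem_iff_lt_colLen.mp hm)
    rw [YoungDiagram.mem_iff_lt_rowLen] at e1 e2
    omega

lemma mMaj_summable (q : ℝ) (hq : 0 ≤ q) : Summable (mMaj q) :=
  ((sigma_summable q hq).comp_injective iota_injective).congr (fun _ => rfl)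

lemma mMaj_eq (q : ℝ) (μ : YoungDiagram) :
    mMaj q μ = q ^ μ.card /
      (((μ.colLen 0).factorial : ℝ) * ∏ i : Fin (μ.colLen 0), ((μ.rowLen i).factorial : ℝ)) := by
  rw [mMaj, ← card_eq_sum_rowLens μ, Finset.prod_div_distrib,
    Finset.prod_pow_eq_pow_sum]
  ring

lemma mMaj_nonneg (q : ℝ) (hq : 0 ≤ q) (μ : YoungDiagram) : 0 ≤ mMaj q μ := by
  rw [mMaj_eq]
  positivity

lemma dim_mul_colLen0 (μ : YoungDiagram) :
    dimSYT μ * Nat.factorial (μ.colLen 0) ≤ Nat.factorial μ.card := by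
  by_cases h0 : μ.rowLen 0 = 0
  · have hc : μ.colLen 0 = 0 := by
      by_contra hc
      have : (0, 0) ∈ μ := YoungDiagram.mem_iff_lt_colLen.mpr (Nat.pos_of_ne_zero hc)
      rw [YoungDiagram.mem_iff_lt_rowLen] at this
      omega
    rw [hc]
    calc dimSYT μ * Nat.factorial 0 = dimSYT μ := by simp [Nat.factorial]
    _ ≤ dimSYT μ * ∏ i : Fin (μ.colLen 0), Nat.factorial (μ.rowLen i) :=
        Nat.le_mul_of_pos_right _ (Finset.prod_pos fun i _ => Nat.factorial_pos _)
    _ ≤ Nat.factorial μ.card := dim_mul_rows μ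
  · have h1 : Nat.factorial (μ.colLen 0)
        ≤ ∏ l : Fin (μ.rowLen 0), Nat.factorial (μ.colLen l) := by
      simpa using Finset.single_le_prod'
        (f := fun l : Fin (μ.rowLen 0) => Nat.factorial (μ.colLen l))
        (fun i _ => Nat.one_le_iff_ne_zero.mpr (Nat.factorial_ne_zero _))
        (Finset.mem_univ (⟨0, Nat.pos_of_ne_zero h0⟩ : Fin (μ.rowLen 0)))
    calc dimSYT μ * Nat.factorial (μ.colLen 0)
        ≤ dimSYT μ * ∏ l : Fin (μ.rowLen 0), Nat.factorial (μ.colLen l) :=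
          Nat.mul_le_mul_left _ h1
    _ ≤ Nat.factorial μ.card := dim_mul_cols μ

lemma dim_sq_le (μ : YoungDiagram) :
    ((dimSYT μ : ℝ) / (Nat.factorial μ.card : ℝ)) ^ 2
      ≤ 1 / ((Nat.factorial (μ.colLen 0) : ℝ)
          * ∏ i : Fin (μ.colLen 0), (Nat.factorial (μ.rowLen i) : ℝ)) := by
  have key : (dimSYT μ : ℝ) ^ 2 * ((Nat.factorial (μ.colLen 0) : ℝ)
      * ∏ i : Fin (μ.colLen 0), (Nat.factorial (μ.rowLen i) : ℝ))
      ≤ (Nat.factorial μ.card : ℝ) ^ 2 := by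
    have h1 := dim_mul_rows μ
    have h2 := dim_mul_colLen0 μ
    have h3 : dimSYT μ ^ 2 * (Nat.factorial (μ.colLen 0)
        * ∏ i : Fin (μ.colLen 0), Nat.factorial (μ.rowLen i))
        ≤ Nat.factorial μ.card ^ 2 := by
      calc dimSYT μ ^ 2 * (Nat.factorial (μ.colLen 0)
          * ∏ i : Fin (μ.colLen 0), Nat.factorial (μ.rowLen i))
          = (dimSYT μ * ∏ i : Fin (μ.colLen 0), Nat.factorial (μ.rowLen i))
            * (dimSYT μ * Nat.factorial (μ.colLen 0)) := by ring
      _ ≤ Nat.factorial μ.card * Nat.factorial μ.card := Nat.mul_le_mul h1 h2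
      _ = Nat.factorial μ.card ^ 2 := by ring
    exact_mod_cast h3
  have hpos : (0:ℝ) < (Nat.factorial (μ.colLen 0) : ℝ)
      * ∏ i : Fin (μ.colLen 0), (Nat.factorial (μ.rowLen i) : ℝ) := by
    apply mul_pos
    · exact_mod_cast Nat.factorial_pos _
    · exact Finset.prod_pos fun i _ => by exact_mod_cast Nat.factorial_pos _
  have hfpos : (0:ℝ) < (Nat.factorial μ.card : ℝ) := by exact_mod_cast Nat.factorial_pos _
  rw [div_pow, div_le_div_iff₀ (by positivity) hpos]
  calc (dimSYT μ : ℝ) ^ 2 * ((Nat.factorial (μ.colLen 0) : ℝ)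
      * ∏ i : Fin (μ.colLen 0), (Nat.factorial (μ.rowLen i) : ℝ)) ≤ (Nat.factorial μ.card : ℝ) ^ 2 := key
  _ = 1 * ((Nat.factorial μ.card : ℝ)) ^ 2 := by ring

lemma term_bound (σ t : ℂ) (δ C : ℝ) (hδ0 : 0 < δ)
    (hδ : ∀ A : ℤ, δ ≤ ‖(A : ℂ) + 2 * σ‖) (hC : 0 ≤ C) (ht : ‖t‖ ≤ C)
    (p : YoungDiagram × YoungDiagram) :
    ‖blockTerm σ t p‖ ≤ mMaj (C / δ ^ 2) p.1 * mMaj (C / δ ^ 2) p.2 := by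
  obtain ⟨l, m⟩ := p
  have hq0 : (0:ℝ) ≤ C / δ ^ 2 := div_nonneg hC (by positivity)
  have hb : δ ^ (l.card + m.card) ≤ ‖bFactor l m σ‖ := bFactor_norm_ge l m σ δ hδ0.le hδ
  have hbpos : (0:ℝ) < δ ^ (l.card + m.card) := by positivity
  have hX : ‖((dimSYT l * dimSYT m : ℂ) / ((Nat.factorial l.card) * (Nat.factorial m.card)))‖
      = ((dimSYT l : ℝ) * (dimSYT m : ℝ))
        / ((Nat.factorial l.card : ℝ) * (Nat.factorial m.card : ℝ)) := by
    rw [norm_div, norm_mul]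
    norm_num [Complex.norm_natCast]
  have step1 : ‖blockTerm σ t (l, m)‖
      ≤ (((dimSYT l : ℝ) * (dimSYT m : ℝ))
          / ((Nat.factorial l.card : ℝ) * (Nat.factorial m.card : ℝ))) ^ 2
        * C ^ (l.card + m.card) / (δ ^ (l.card + m.card)) ^ 2 := by
    rw [blockTerm, norm_div, norm_mul, norm_pow, norm_pow, norm_pow, hX]
    apply div_le_div₀ (by positivity) ?_ (by positivity) ?_
    · apply mul_le_mul_of_nonneg_left ?_ (by positivity)
      exact pow_le_pow_left₀ (norm_nonneg t) ht _
    · exact pow_le_pow_left₀ hbpos.le hb 2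
  have step2 : (((dimSYT l : ℝ) * (dimSYT m : ℝ))
          / ((Nat.factorial l.card : ℝ) * (Nat.factorial m.card : ℝ))) ^ 2
        * C ^ (l.card + m.card) / (δ ^ (l.card + m.card)) ^ 2
      = (((dimSYT l : ℝ) / (Nat.factorial l.card : ℝ)) ^ 2 * (C / δ ^ 2) ^ l.card)
        * (((dimSYT m : ℝ) / (Nat.factorial m.card : ℝ)) ^ 2 * (C / δ ^ 2) ^ m.card) := by
    have hδne : (δ:ℝ) ≠ 0 := hδ0.ne'
    field_simp
    have h1 : δ ^ (l.card * 2) * δ⁻¹ ^ (l.card * 2) = 1 := by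
      rw [← mul_pow, mul_inv_cancel₀ hδne, one_pow]
    have h2 : δ ^ (m.card * 2) * δ⁻¹ ^ (m.card * 2) = 1 := by
      rw [← mul_pow, mul_inv_cancel₀ hδne, one_pow]
    linear_combination (-((dimSYT l : ℝ) ^ 2 * (dimSYT m : ℝ) ^ 2 * C ^ l.card * C ^ m.card)) * h1
      + (-((dimSYT l : ℝ) ^ 2 * (dimSYT m : ℝ) ^ 2 * C ^ l.card * C ^ m.card
        * δ ^ (l.card * 2) * δ⁻¹ ^ (l.card * 2))) * h2
  have step3 : (((dimSYT l : ℝ) / (Nat.factorial l.card : ℝ)) ^ 2 * (C / δ ^ 2) ^ l.card)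
        * (((dimSYT m : ℝ) / (Nat.factorial m.card : ℝ)) ^ 2 * (C / δ ^ 2) ^ m.card)
      ≤ mMaj (C / δ ^ 2) l * mMaj (C / δ ^ 2) m := by
    apply mul_le_mul ?_ ?_ (by positivity) ?_
    · rw [mMaj_eq]
      calc ((dimSYT l : ℝ) / (Nat.factorial l.card : ℝ)) ^ 2 * (C / δ ^ 2) ^ l.card
          ≤ (1 / ((Nat.factorial (l.colLen 0) : ℝ)
              * ∏ i : Fin (l.colLen 0), (Nat.factorial (l.rowLen i) : ℝ)))
            * (C / δ ^ 2) ^ l.card :=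
            mul_le_mul_of_nonneg_right (dim_sq_le l) (by positivity)
      _ = _ := by rw [one_div, inv_mul_eq_div]
    · rw [mMaj_eq]
      calc ((dimSYT m : ℝ) / (Nat.factorial m.card : ℝ)) ^ 2 * (C / δ ^ 2) ^ m.card
          ≤ (1 / ((Nat.factorial (m.colLen 0) : ℝ)
              * ∏ i : Fin (m.colLen 0), (Nat.factorial (m.rowLen i) : ℝ)))
            * (C / δ ^ 2) ^ m.card :=
            mul_le_mul_of_nonneg_right (dim_sq_le m) (by positivity)
      _ = _ := by rw [one_div, inv_mul_eq_div]
    · have h1 : (0:ℝ) ≤ 1 / ((Nat.factorial (l.colLen 0) : ℝ)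
          * ∏ i : Fin (l.colLen 0), (Nat.factorial (l.rowLen i) : ℝ)) := by positivity
      rw [mMaj_eq]
      positivity
  calc ‖blockTerm σ t (l, m)‖ ≤ _ := step1
  _ = _ := step2
  _ ≤ _ := step3


/-- For `2σ ∉ ℤ`, the conformal block series converges absolutely for every `t ∈ ℂ`,
uniformly on every bounded subset of `ℂ`. -/
theorem blockSeries_converges (σ : ℂ) (hσ : ∀ n : ℤ, 2 * σ ≠ (n : ℂ)) :
    (∀ t : ℂ, Summable fun p : YoungDiagram × YoungDiagram => ‖blockTerm σ t p‖) ∧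
    (∀ s : Set ℂ, Bornology.IsBounded s →
      TendstoUniformlyOn
        (fun (F : Finset (YoungDiagram × YoungDiagram)) (t : ℂ) => ∑ p ∈ F, blockTerm σ t p)
        (fun t => ∑' p : YoungDiagram × YoungDiagram, blockTerm σ t p)
        Filter.atTop s) := by
  obtain ⟨δ, hδ0, hδ⟩ := delta_spec σ hσ
  constructor
  · intro t
    have hq0 : (0:ℝ) ≤ ‖t‖ / δ ^ 2 := div_nonneg (norm_nonneg t) (by positivity)
    have hsum : Summable (fun p : YoungDiagram × YoungDiagram =>
        mMaj (‖t‖ / δ ^ 2) p.1 * mMaj (‖t‖ / δ ^ 2) p.2) :=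
      Summable.mul_of_nonneg (f := mMaj (‖t‖ / δ ^ 2)) (g := mMaj (‖t‖ / δ ^ 2))
        (mMaj_summable _ hq0) (mMaj_summable _ hq0)
        (fun μ => mMaj_nonneg _ hq0 μ) (fun μ => mMaj_nonneg _ hq0 μ)
    exact Summable.of_nonneg_of_le (fun p => norm_nonneg _)
      (fun p => term_bound σ t δ ‖t‖ hδ0 hδ (norm_nonneg t) le_rfl p) hsum
  · intro s hs
    obtain ⟨C0, hC0⟩ := isBounded_iff_forall_norm_le.mp hs
    have hq0 : (0:ℝ) ≤ max C0 0 / δ ^ 2 := div_nonneg (le_max_right _ _) (by positivity)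
    have hsum : Summable (fun p : YoungDiagram × YoungDiagram =>
        mMaj (max C0 0 / δ ^ 2) p.1 * mMaj (max C0 0 / δ ^ 2) p.2) :=
      Summable.mul_of_nonneg (f := mMaj (max C0 0 / δ ^ 2)) (g := mMaj (max C0 0 / δ ^ 2))
        (mMaj_summable _ hq0) (mMaj_summable _ hq0)
        (fun μ => mMaj_nonneg _ hq0 μ) (fun μ => mMaj_nonneg _ hq0 μ)
    apply tendstoUniformlyOn_tsum hsum
    intro p t htmem
    exact term_bound σ t δ (max C0 0) hδ0 hδ (le_max_right _ _)
      ((hC0 t htmem).trans (le_max_left _ _)) p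
end

section
/- Let σ ∈ ℂ with 2σ ∉ ℤ and set L = min_{n∈ℤ} |2σ − n|². Then for every t ∈ ℂ the conformal block series satisfies the bound |B(σ,t)| ≤ exp(2|t|/L); more precisely, the sum of the absolute values of the terms of the series defining B(σ,t) is at most exp(2|t|/L). -/
open scoped BigOperators

open YoungDiagram Finset
set_option maxHeartbeats 1000000

namespace YB


/-- `c` can be removed from `μ` leaving a Young diagram. -/
def Removable (μ : YoungDiagram) (c : ℕ × ℕ) : Prop :=
  c ∈ μ ∧ IsLowerSet (↑(μ.cells.erase c) : Set (ℕ × ℕ))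

/-- `c` can be added to `μ` giving a Young diagram. -/
def Addable (μ : YoungDiagram) (c : ℕ × ℕ) : Prop :=
  c ∉ μ ∧ IsLowerSet (↑(insert c μ.cells) : Set (ℕ × ℕ))

lemma removable_max {μ : YoungDiagram} {c : ℕ × ℕ} (h : Removable μ c) {d : ℕ × ℕ}
    (hd : d ∈ μ) (h1 : c.1 ≤ d.1) (h2 : c.2 ≤ d.2) : d = c := by
  by_contra hne
  have hde : d ∈ (↑(μ.cells.erase c) : Set (ℕ × ℕ)) := by
    simp only [Finset.coe_erase, Set.mem_diff, Set.mem_singleton_iff]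
    exact ⟨by simpa using hd, hne⟩
  have : c ∈ (↑(μ.cells.erase c) : Set (ℕ × ℕ)) := h.2 (Prod.mk_le_mk.2 ⟨h1, h2⟩ : c ≤ d) hde
  simp at this

lemma erase_lower_of_max {μ : YoungDiagram} {c : ℕ × ℕ}
    (hmax : ∀ d ∈ μ, c.1 ≤ d.1 → c.2 ≤ d.2 → d = c) :
    IsLowerSet (↑(μ.cells.erase c) : Set (ℕ × ℕ)) := by
  intro a b hba ha
  simp only [Finset.coe_erase, Set.mem_diff, Set.mem_singleton_iff, Finset.mem_coe,
    YoungDiagram.mem_cells] at ha ⊢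
  have hbμ : b ∈ μ := μ.isLowerSet hba ha.1
  refine ⟨hbμ, fun hbc => ?_⟩
  subst hbc
  exact ha.2 (hmax a ha.1 hba.1 hba.2)

lemma addable_max {μ : YoungDiagram} {c : ℕ × ℕ} (h : Addable μ c) {d : ℕ × ℕ}
    (hd : d ∈ μ) (h1 : c.1 ≤ d.1) (h2 : c.2 ≤ d.2) : False := by
  exact h.1 (μ.isLowerSet (Prod.mk_le_mk.2 ⟨h1, h2⟩ : c ≤ d) hd)

lemma removable_iff {μ : YoungDiagram} {i j : ℕ} :
    Removable μ (i, j) ↔ μ.rowLen i = j + 1 ∧ μ.rowLen (i + 1) ≤ j := by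
  constructor
  · intro h
    have hmem : j < μ.rowLen i := YoungDiagram.mem_iff_lt_rowLen.1 h.1
    have h1 : (i, j + 1) ∉ μ := fun hm => by
      have := removable_max h hm (le_refl i) (by omega)
      simp at this
    have h2 : (i + 1, j) ∉ μ := fun hm => by
      have := removable_max h hm (by omega) (le_refl j)
      simp at this
    rw [YoungDiagram.mem_iff_lt_rowLen, not_lt] at h1 h2
    exact ⟨by omega, h2⟩
  · rintro ⟨h1, h2⟩
    have hmem : (i, j) ∈ μ := YoungDiagram.mem_iff_lt_rowLen.2 (by omega)
    refine ⟨hmem, erase_lower_of_max ?_⟩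
    rintro ⟨a, b⟩ hab ha hb
    simp only at ha hb
    have hblt : b < μ.rowLen a := YoungDiagram.mem_iff_lt_rowLen.1 hab
    have hra : μ.rowLen a ≤ μ.rowLen i := μ.rowLen_anti i a ha
    have hbj : b = j := by omega
    have hai : a = i := by
      by_contra hne
      have : i + 1 ≤ a := by omega
      have := μ.rowLen_anti (i + 1) a this
      omega
    simp [hai, hbj]

lemma addable_iff {μ : YoungDiagram} {i j : ℕ} :
    Addable μ (i, j) ↔ μ.rowLen i = j ∧ (i = 0 ∨ j < μ.rowLen (i - 1)) := by
  constructor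
  · intro h
    have hnm : ¬ j < μ.rowLen i := fun hm => h.1 (YoungDiagram.mem_iff_lt_rowLen.2 hm)
    have hcell : (i, j) ∈ (↑(insert (i, j) μ.cells) : Set (ℕ × ℕ)) := by simp
    have hrow : μ.rowLen i = j := by
      rcases Nat.eq_zero_or_pos j with hj | hj
      · omega
      · have : ((i, j - 1) : ℕ × ℕ) ∈ (↑(insert (i, j) μ.cells) : Set (ℕ × ℕ)) :=
          h.2 (Prod.mk_le_mk.2 ⟨le_refl i, by omega⟩) hcell
        simp only [Finset.coe_insert, Set.mem_insert_iff, Finset.mem_coe,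
          YoungDiagram.mem_cells] at this
        rcases this with heq | hmem
        · exfalso; have := congrArg Prod.snd heq; simp at this; omega
        · have := YoungDiagram.mem_iff_lt_rowLen.1 hmem; omega
    refine ⟨hrow, ?_⟩
    rcases Nat.eq_zero_or_pos i with hi | hi
    · exact Or.inl hi
    · right
      have : ((i - 1, j) : ℕ × ℕ) ∈ (↑(insert (i, j) μ.cells) : Set (ℕ × ℕ)) :=
        h.2 (Prod.mk_le_mk.2 ⟨by omega, le_refl j⟩) hcell
      simp only [Finset.coe_insert, Set.mem_insert_iff, Finset.mem_coe,
        YoungDiagram.mem_cells] at this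
      rcases this with heq | hmem
      · exfalso; have := congrArg Prod.fst heq; simp at this; omega
      · exact YoungDiagram.mem_iff_lt_rowLen.1 hmem
  · rintro ⟨h1, h2⟩
    refine ⟨fun hm => by have := YoungDiagram.mem_iff_lt_rowLen.1 hm; omega, ?_⟩
    rintro ⟨x, y⟩ ⟨a, b⟩ hba hx
    simp only [Finset.coe_insert, Set.mem_insert_iff, Finset.mem_coe,
      YoungDiagram.mem_cells] at hx ⊢
    rw [Prod.mk_le_mk] at hba
    obtain ⟨hba1, hba2⟩ := hba
    rcases hx with heq | hmem
    · have hxi : x = i := (Prod.ext_iff.1 heq).1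
      have hyj : y = j := (Prod.ext_iff.1 heq).2
      rcases Nat.lt_or_ge a i with hai | hai
      · right
        apply YoungDiagram.mem_iff_lt_rowLen.2
        have hmono := μ.rowLen_anti a (i - 1) (by omega)
        rcases h2 with h20 | h2'
        · omega
        · omega
      · have haieq : a = i := by omega
        rcases Nat.lt_or_ge b j with hbj | hbj
        · right
          apply YoungDiagram.mem_iff_lt_rowLen.2
          rw [haieq]
          omega
        · left
          have hb : b = j := by omega
          rw [Prod.ext_iff]
          exact ⟨haieq, hb⟩
    · right; exact μ.isLowerSet (Prod.mk_le_mk.2 ⟨hba1, hba2⟩) hmem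

/-- rows at which a cell can be removed -/
def rems (μ : YoungDiagram) : Finset ℕ :=
  (range (μ.colLen 0)).filter fun i => μ.rowLen (i + 1) < μ.rowLen i

/-- rows at which a cell can be added -/
def adds (μ : YoungDiagram) : Finset ℕ := insert 0 ((rems μ).image (· + 1))

noncomputable def removables (μ : YoungDiagram) : Finset (ℕ × ℕ) :=
  (rems μ).image fun i => (i, μ.rowLen i - 1)

noncomputable def addables (μ : YoungDiagram) : Finset (ℕ × ℕ) :=
  (adds μ).image fun i => (i, μ.rowLen i)

lemma rowLen_pos_lt_colLen {μ : YoungDiagram} {i : ℕ} (h : 0 < μ.rowLen i) :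
    i < μ.colLen 0 := by
  rw [← YoungDiagram.mem_iff_lt_colLen]
  exact YoungDiagram.mem_iff_lt_rowLen.2 h

lemma mem_rems {μ : YoungDiagram} {i : ℕ} :
    i ∈ rems μ ↔ μ.rowLen (i + 1) < μ.rowLen i := by
  simp only [rems, Finset.mem_filter, Finset.mem_range]
  exact ⟨fun h => h.2, fun h => ⟨rowLen_pos_lt_colLen (by omega), h⟩⟩

lemma mem_adds {μ : YoungDiagram} {i : ℕ} :
    i ∈ adds μ ↔ i = 0 ∨ μ.rowLen i < μ.rowLen (i - 1) := by
  simp only [adds, Finset.mem_insert, Finset.mem_image, mem_rems]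
  constructor
  · rintro (h | ⟨k, hk, rfl⟩)
    · exact Or.inl h
    · right; simpa using hk
  · rintro (h | h)
    · exact Or.inl h
    · rcases Nat.eq_zero_or_pos i with hi | hi
      · exact Or.inl hi
      · right
        refine ⟨i - 1, ?_, by omega⟩
        have hi1 : i - 1 + 1 = i := by omega
        rw [hi1]
        exact h

lemma mem_removables {μ : YoungDiagram} {c : ℕ × ℕ} :
    c ∈ removables μ ↔ Removable μ c := by
  obtain ⟨i, j⟩ := c
  simp only [removables, Finset.mem_image, mem_rems, removable_iff]
  constructor
  · rintro ⟨k, hk, heq⟩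
    rw [Prod.ext_iff] at heq
    simp only at heq
    obtain ⟨rfl, rfl⟩ := heq
    omega
  · rintro ⟨h1, h2⟩
    exact ⟨i, by omega, by simp [Prod.ext_iff]; omega⟩

lemma mem_addables {μ : YoungDiagram} {c : ℕ × ℕ} :
    c ∈ addables μ ↔ Addable μ c := by
  obtain ⟨i, j⟩ := c
  simp only [addables, Finset.mem_image, mem_adds, addable_iff]
  constructor
  · rintro ⟨k, hk, heq⟩
    rw [Prod.ext_iff] at heq
    simp only at heq
    obtain ⟨rfl, rfl⟩ := heq
    exact ⟨rfl, hk⟩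
  · rintro ⟨h1, h2⟩
    refine ⟨i, ?_, by simp [Prod.ext_iff, h1]⟩
    rcases h2 with h | h
    · exact Or.inl h
    · right; omega

lemma card_addables (μ : YoungDiagram) :
    (addables μ).card = (removables μ).card + 1 := by
  have h1 : (addables μ).card = (adds μ).card :=
    Finset.card_image_of_injective _ (fun a b h => by
      simpa using congrArg Prod.fst h)
  have h2 : (removables μ).card = (rems μ).card :=
    Finset.card_image_of_injective _ (fun a b h => by
      simpa using congrArg Prod.fst h)
  have h3 : (adds μ).card = (rems μ).card + 1 := by
    rw [adds, Finset.card_insert_of_notMem (by simp), Finset.card_image_of_injective _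
      (fun a b h => by omega)]
  omega

def IsSYT (μ : YoungDiagram) (T : {c // c ∈ μ.cells} ≃ Fin μ.card) : Prop :=
  ∀ c d : {c // c ∈ μ.cells},
    (c : ℕ × ℕ).1 ≤ (d : ℕ × ℕ).1 → (c : ℕ × ℕ).2 ≤ (d : ℕ × ℕ).2 → T c ≤ T d

abbrev SYT (μ : YoungDiagram) := {T : {c // c ∈ μ.cells} ≃ Fin μ.card // IsSYT μ T}

lemma dimSYT_eq (μ : YoungDiagram) : dimSYT μ = Nat.card (SYT μ) := rfl

instance (μ : YoungDiagram) : Finite (SYT μ) :=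
  Subtype.finite

/-- The diagram obtained by removing a removable cell. -/
def ersD (μ : YoungDiagram) (c : ℕ × ℕ) (h : Removable μ c) : YoungDiagram :=
  ⟨μ.cells.erase c, h.2⟩

lemma ersD_cells (μ : YoungDiagram) (c : ℕ × ℕ) (h : Removable μ c) :
    (ersD μ c h).cells = μ.cells.erase c := rfl

lemma mem_cells_of_mem {μ : YoungDiagram} {c : ℕ × ℕ} (h : c ∈ μ) : c ∈ μ.cells :=
  (YoungDiagram.mem_cells c).2 h

lemma ersD_card {μ : YoungDiagram} {c : ℕ × ℕ} (h : Removable μ c) {m : ℕ}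
    (hm : μ.card = m + 1) : (ersD μ c h).card = m := by
  have : (ersD μ c h).card = μ.card - 1 := Finset.card_erase_of_mem (mem_cells_of_mem h.1)
  omega

section Ext

variable {μ : YoungDiagram} {m : ℕ} {d : ℕ × ℕ}

/-- Extension of a labeling of `μ - d` to `μ`, putting the largest label at `d`. -/
def extF (hd : Removable μ d) (hm : μ.card = m + 1)
    (T' : {c // c ∈ (ersD μ d hd).cells} ≃ Fin (ersD μ d hd).card)
    (x : {c // c ∈ μ.cells}) : Fin μ.card :=
  if hx : (x : ℕ × ℕ) = d then ⟨m, by omega⟩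
  else ⟨(T' ⟨(x : ℕ × ℕ), Finset.mem_erase.2 ⟨hx, x.2⟩⟩).val, by
    have h1 := (T' ⟨(x : ℕ × ℕ), Finset.mem_erase.2 ⟨hx, x.2⟩⟩).isLt
    have h2 := ersD_card hd hm
    omega⟩

variable (hd : Removable μ d) (hm : μ.card = m + 1)
  (T' : {c // c ∈ (ersD μ d hd).cells} ≃ Fin (ersD μ d hd).card)

lemma extF_val_d (x : {c // c ∈ μ.cells}) (hx : (x : ℕ × ℕ) = d) :
    (extF hd hm T' x : ℕ) = m := by
  rw [extF, dif_pos hx]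

lemma extF_val_ne (x : {c // c ∈ μ.cells}) (hx : (x : ℕ × ℕ) ≠ d) :
    (extF hd hm T' x : ℕ) = (T' ⟨(x : ℕ × ℕ), Finset.mem_erase.2 ⟨hx, x.2⟩⟩ : ℕ) := by
  rw [extF, dif_neg hx]

lemma extF_val_lt (x : {c // c ∈ μ.cells}) (hx : (x : ℕ × ℕ) ≠ d) :
    (extF hd hm T' x : ℕ) < m := by
  rw [extF_val_ne hd hm T' x hx]
  have h1 := (T' ⟨(x : ℕ × ℕ), Finset.mem_erase.2 ⟨hx, x.2⟩⟩).isLt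
  have h2 := ersD_card hd hm
  omega

lemma extF_bij : Function.Bijective (extF hd hm T') := by
  constructor
  · intro x1 x2 heq
    have hval : (extF hd hm T' x1 : ℕ) = (extF hd hm T' x2 : ℕ) := congrArg Fin.val heq
    by_cases h1 : (x1 : ℕ × ℕ) = d <;> by_cases h2 : (x2 : ℕ × ℕ) = d
    · exact Subtype.ext (h1.trans h2.symm)
    · rw [extF_val_d hd hm T' x1 h1, extF_val_ne hd hm T' x2 h2] at hval
      have := extF_val_lt hd hm T' x2 h2
      rw [extF_val_ne hd hm T' x2 h2] at this
      omega
    · rw [extF_val_d hd hm T' x2 h2, extF_val_ne hd hm T' x1 h1] at hval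
      have := extF_val_lt hd hm T' x1 h1
      rw [extF_val_ne hd hm T' x1 h1] at this
      omega
    · rw [extF_val_ne hd hm T' x1 h1, extF_val_ne hd hm T' x2 h2] at hval
      have := T'.injective (Fin.ext hval)
      have := congrArg Subtype.val this
      exact Subtype.ext this
  · intro y
    by_cases hy : (y : ℕ) = m
    · refine ⟨⟨d, mem_cells_of_mem hd.1⟩, ?_⟩
      apply Fin.ext
      rw [extF_val_d hd hm T' _ rfl, hy]
    · have hylt : (y : ℕ) < (ersD μ d hd).card := by
        have := y.isLt; have := ersD_card hd hm; omega
      set z := T'.symm ⟨(y : ℕ), hylt⟩ with hz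
      have hzd : (z : ℕ × ℕ) ≠ d := (Finset.mem_erase.1 z.2).1
      refine ⟨⟨(z : ℕ × ℕ), Finset.mem_of_mem_erase z.2⟩, ?_⟩
      apply Fin.ext
      rw [extF_val_ne hd hm T' _ hzd]
      have hcoe : (⟨(z : ℕ × ℕ), Finset.mem_erase.2 ⟨hzd, Finset.mem_of_mem_erase z.2⟩⟩ :
          {c // c ∈ (ersD μ d hd).cells}) = z := Subtype.ext rfl
      rw [hcoe, hz, Equiv.apply_symm_apply]

/-- Extension as an `Equiv`. -/
noncomputable def extE : {c // c ∈ μ.cells} ≃ Fin μ.card :=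
  Equiv.ofBijective _ (extF_bij hd hm T')

lemma extE_apply (x : {c // c ∈ μ.cells}) : extE hd hm T' x = extF hd hm T' x := rfl

lemma extE_isSYT (hT' : IsSYT (ersD μ d hd) T') : IsSYT μ (extE hd hm T') := by
  intro c e hc1 hc2
  rw [Fin.le_def, extE_apply, extE_apply]
  by_cases he : (e : ℕ × ℕ) = d
  · rw [extF_val_d hd hm T' e he]
    by_cases hc : (c : ℕ × ℕ) = d
    · rw [extF_val_d hd hm T' c hc]
    · exact le_of_lt (extF_val_lt hd hm T' c hc)
  · have hcd : (c : ℕ × ℕ) ≠ d := by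
      intro hc
      apply he
      have hce : (c : ℕ × ℕ).1 ≤ (e : ℕ × ℕ).1 := hc1
      exact removable_max hd ((YoungDiagram.mem_cells _).1 e.2) (hc ▸ hc1) (hc ▸ hc2)
    rw [extF_val_ne hd hm T' c hcd, extF_val_ne hd hm T' e he]
    exact hT' _ _ hc1 hc2

end Ext


section Res

variable {μ : YoungDiagram} {m : ℕ}

/-- The cell carrying the top label. -/
noncomputable def topCell (hm : μ.card = m + 1) (T : {c // c ∈ μ.cells} ≃ Fin μ.card) :
    {c // c ∈ μ.cells} :=
  T.symm ⟨m, by omega⟩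

variable (hm : μ.card = m + 1) (T : {c // c ∈ μ.cells} ≃ Fin μ.card)

lemma topCell_val : (T (topCell hm T) : ℕ) = m := by
  rw [topCell, Equiv.apply_symm_apply]

lemma topCell_removable (hT : IsSYT μ T) : Removable μ ((topCell hm T : _) : ℕ × ℕ) := by
  have hmax : ∀ e ∈ μ, ((topCell hm T : _) : ℕ × ℕ).1 ≤ e.1 →
      ((topCell hm T : _) : ℕ × ℕ).2 ≤ e.2 → e = ((topCell hm T : _) : ℕ × ℕ) := by
    intro e he h1 h2
    have hle := hT (topCell hm T) ⟨e, mem_cells_of_mem he⟩ h1 h2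
    rw [Fin.le_def, topCell_val hm T] at hle
    have hlt := (T ⟨e, mem_cells_of_mem he⟩).isLt
    have hveq : (T ⟨e, mem_cells_of_mem he⟩ : ℕ) = m := by omega
    have : T ⟨e, mem_cells_of_mem he⟩ = T (topCell hm T) := by
      apply Fin.ext; rw [hveq, topCell_val hm T]
    have := T.injective this
    exact congrArg Subtype.val this
  exact ⟨(YoungDiagram.mem_cells _).1 (topCell hm T).2, erase_lower_of_max hmax⟩

/-- Restriction of a labeling of `μ` to `μ` minus its top cell. -/
noncomputable def resF (hT : IsSYT μ T)
    (x : {c // c ∈ (ersD μ _ (topCell_removable hm T hT)).cells}) :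
    Fin (ersD μ _ (topCell_removable hm T hT)).card := by
  refine ⟨(T ⟨(x : ℕ × ℕ), Finset.mem_of_mem_erase x.2⟩ : ℕ), ?_⟩
  have h1 := (T ⟨(x : ℕ × ℕ), Finset.mem_of_mem_erase x.2⟩).isLt
  have h2 := ersD_card (topCell_removable hm T hT) hm
  have h3 : (T ⟨(x : ℕ × ℕ), Finset.mem_of_mem_erase x.2⟩ : ℕ) ≠ m := by
    intro hvm
    have : T ⟨(x : ℕ × ℕ), Finset.mem_of_mem_erase x.2⟩ = T (topCell hm T) := by
      apply Fin.ext; rw [hvm, topCell_val hm T]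
    have := congrArg Subtype.val (T.injective this)
    exact (Finset.mem_erase.1 x.2).1 this
  omega

lemma resF_val (hT : IsSYT μ T)
    (x : {c // c ∈ (ersD μ _ (topCell_removable hm T hT)).cells}) :
    (resF hm T hT x : ℕ) = (T ⟨(x : ℕ × ℕ), Finset.mem_of_mem_erase x.2⟩ : ℕ) := rfl

lemma resF_bij (hT : IsSYT μ T) : Function.Bijective (resF hm T hT) := by
  constructor
  · intro x1 x2 heq
    have := congrArg Fin.val heq
    rw [resF_val, resF_val] at this
    have := congrArg Subtype.val (T.injective (Fin.ext this))
    exact Subtype.ext this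
  · intro y
    have hylt : (y : ℕ) < μ.card := by
      have := y.isLt
      have := ersD_card (topCell_removable hm T hT) hm
      omega
    set z := T.symm ⟨(y : ℕ), hylt⟩ with hz
    have hzne : (z : ℕ × ℕ) ≠ ((topCell hm T : _) : ℕ × ℕ) := by
      intro hcontra
      have hzz : z = topCell hm T := Subtype.ext hcontra
      have h5 : T z = ⟨(y : ℕ), hylt⟩ := by rw [hz, Equiv.apply_symm_apply]
      have h6 : (T z : ℕ) = m := by rw [hzz, topCell_val]
      have h7 : ((⟨(y : ℕ), hylt⟩ : Fin μ.card) : ℕ) = m := (congrArg Fin.val h5).symm.trans h6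
      have h8 : ((⟨(y : ℕ), hylt⟩ : Fin μ.card) : ℕ) = (y : ℕ) := rfl
      have hy2 := y.isLt
      have h9 := ersD_card (topCell_removable hm T hT) hm
      omega
    refine ⟨⟨(z : ℕ × ℕ), Finset.mem_erase.2 ⟨hzne, z.2⟩⟩, ?_⟩
    apply Fin.ext
    rw [resF_val]
    have hcoe : (⟨(z : ℕ × ℕ), Finset.mem_of_mem_erase (Finset.mem_erase.2 ⟨hzne, z.2⟩)⟩ :
        {c // c ∈ μ.cells}) = z := Subtype.ext rfl
    rw [hcoe, hz, Equiv.apply_symm_apply]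

noncomputable def resE (hT : IsSYT μ T) :
    {c // c ∈ (ersD μ _ (topCell_removable hm T hT)).cells} ≃
      Fin (ersD μ _ (topCell_removable hm T hT)).card :=
  Equiv.ofBijective _ (resF_bij hm T hT)

lemma resE_isSYT (hT : IsSYT μ T) : IsSYT _ (resE hm T hT) := by
  intro c e h1 h2
  rw [Fin.le_def]
  exact hT _ _ h1 h2

end Res

section LemA

variable {μ : YoungDiagram}

open scoped Classical in
noncomputable def dimAux (s : Finset (ℕ × ℕ)) : ℕ :=
  if h : IsLowerSet (↑s : Set (ℕ × ℕ)) then dimSYT ⟨s, h⟩ else 0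

lemma dimAux_eq (s : Finset (ℕ × ℕ)) (h : IsLowerSet (↑s : Set (ℕ × ℕ))) :
    dimAux s = dimSYT ⟨s, h⟩ := by
  unfold dimAux
  exact dif_pos h

/-- The "add top cell" map from labelings of smaller diagrams. -/
noncomputable def bigF (μ : YoungDiagram) {m : ℕ} (hm : μ.card = m + 1)
    (p : Σ dd : {c // c ∈ removables μ}, SYT (ersD μ (↑dd) (mem_removables.1 dd.2))) :
    SYT μ :=
  ⟨extE (mem_removables.1 p.1.2) hm p.2.1, extE_isSYT _ hm _ p.2.2⟩

lemma bigF_bij (μ : YoungDiagram) {m : ℕ} (hm : μ.card = m + 1) :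
    Function.Bijective (bigF μ hm) := by
  constructor
  · rintro ⟨d1, T1, hT1⟩ ⟨d2, T2, hT2⟩ heq
    have heqE : extE (mem_removables.1 d1.2) hm T1 = extE (mem_removables.1 d2.2) hm T2 :=
      congrArg Subtype.val heq
    have hd12 : (d1 : ℕ × ℕ) = (d2 : ℕ × ℕ) := by
      by_contra hne
      have hmem1 : ((d1 : ℕ × ℕ)) ∈ μ.cells := mem_cells_of_mem (mem_removables.1 d1.2).1
      have h1 : (extE (mem_removables.1 d1.2) hm T1 ⟨_, hmem1⟩ : ℕ) = m :=
        extF_val_d _ hm _ _ rfl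
      have h2 : (extE (mem_removables.1 d2.2) hm T2 ⟨_, hmem1⟩ : ℕ) < m :=
        extF_val_lt _ hm _ _ hne
      rw [heqE] at h1
      omega
    obtain rfl : d1 = d2 := Subtype.ext hd12
    have hver : ∀ (T : {c // c ∈ (ersD μ (↑d1) (mem_removables.1 d1.2)).cells} ≃
        Fin (ersD μ (↑d1) (mem_removables.1 d1.2)).card)
        (x : {c // c ∈ (ersD μ (↑d1) (mem_removables.1 d1.2)).cells}),
        (extE (mem_removables.1 d1.2) hm T ⟨(x : ℕ × ℕ), Finset.mem_of_mem_erase x.2⟩ : ℕ)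
          = (T x : ℕ) := by
      intro T x
      rw [extE_apply, extF_val_ne _ hm _ _ (Finset.mem_erase.1 x.2).1]
    have hTT : T1 = T2 := by
      apply Equiv.ext
      intro x
      apply Fin.ext
      rw [← hver T1 x, ← hver T2 x, heqE]
    subst hTT
    rfl
  · rintro ⟨T, hT⟩
    have htop := topCell_removable hm T hT
    refine ⟨⟨⟨_, mem_removables.2 htop⟩, ⟨resE hm T hT, resE_isSYT hm T hT⟩⟩, ?_⟩
    apply Subtype.ext
    apply Equiv.ext
    intro x
    apply Fin.ext
    show (extF _ hm _ x : ℕ) = (T x : ℕ)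
    by_cases hx : (x : ℕ × ℕ) = ((topCell hm T : _) : ℕ × ℕ)
    · rw [extF_val_d _ hm _ x hx]
      have hxt : x = topCell hm T := Subtype.ext hx
      rw [hxt, topCell_val]
    · rw [extF_val_ne _ hm _ x hx]
      show (T ⟨(x : ℕ × ℕ), Finset.mem_of_mem_erase (Finset.mem_erase.2 ⟨hx, x.2⟩)⟩ : ℕ)
        = (T x : ℕ)
      exact congrArg (fun z => ((T z) : ℕ)) (Subtype.ext rfl)

lemma lemA_attach {m : ℕ} (hm : μ.card = m + 1) :
    dimSYT μ = ∑ dd ∈ (removables μ).attach,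
      dimSYT (ersD μ (↑dd) (mem_removables.1 dd.2)) := by
  classical
  have hcards : Nat.card (SYT μ) =
      Nat.card (Σ dd : {c // c ∈ removables μ}, SYT (ersD μ (↑dd) (mem_removables.1 dd.2))) :=
    (Nat.card_congr (Equiv.ofBijective _ (bigF_bij μ hm))).symm
  letI : ∀ dd : {c // c ∈ removables μ},
      Fintype (SYT (ersD μ (↑dd) (mem_removables.1 dd.2))) := fun dd => Fintype.ofFinite _
  rw [dimSYT_eq μ, hcards, Nat.card_eq_fintype_card, Fintype.card_sigma,
    Finset.univ_eq_attach]
  exact Finset.sum_congr rfl fun dd _ => (Nat.card_eq_fintype_card).symm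

lemma card_pos_of_ne_bot (hne : μ ≠ ⊥) : 0 < μ.card := by
  rcases Finset.eq_empty_or_nonempty μ.cells with h | h
  · exfalso
    apply hne
    apply SetLike.ext
    intro x
    constructor
    · intro hx
      have : x ∈ μ.cells := mem_cells_of_mem hx
      rw [h] at this
      simp at this
    · intro hx
      exact absurd hx (YoungDiagram.notMem_bot x)
  · exact Finset.card_pos.2 h

lemma lemA (hne : μ ≠ ⊥) :
    dimSYT μ = ∑ d ∈ removables μ, dimAux (μ.cells.erase d) := by
  have hpos : 0 < μ.card := card_pos_of_ne_bot hne
  obtain ⟨m, hm⟩ : ∃ m, μ.card = m + 1 := ⟨μ.card - 1, by omega⟩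
  rw [lemA_attach hm, ← Finset.sum_attach (removables μ) fun d => dimAux (μ.cells.erase d)]
  exact Finset.sum_congr rfl fun dd _ => by
    rw [dimAux_eq _ (mem_removables.1 dd.2).2]
    rfl

lemma dimSYT_bot : dimSYT (⊥ : YoungDiagram) = 1 := by
  rw [dimSYT_eq]
  haveI he : IsEmpty {c // c ∈ (⊥ : YoungDiagram).cells} := by
    constructor
    rintro ⟨c, hc⟩
    rw [YoungDiagram.cells_bot] at hc
    simp at hc
  haveI he2 : IsEmpty (Fin (⊥ : YoungDiagram).card) := by
    constructor
    intro i
    have := i.isLt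
    have h0 : (⊥ : YoungDiagram).card = 0 := by
      show (⊥ : YoungDiagram).cells.card = 0
      rw [YoungDiagram.cells_bot]
      rfl
    omega
  haveI : Unique (SYT (⊥ : YoungDiagram)) := by
    refine ⟨⟨⟨Equiv.equivOfIsEmpty _ _, fun c => isEmptyElim c⟩⟩, ?_⟩
    rintro ⟨T, hT⟩
    apply Subtype.ext
    apply Equiv.ext
    intro c
    exact isEmptyElim c
  exact Nat.card_unique

end LemA

def insD (μ : YoungDiagram) (c : ℕ × ℕ) (h : Addable μ c) : YoungDiagram :=
  ⟨insert c μ.cells, h.2⟩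

lemma yd_ext {μ ν : YoungDiagram} (h : μ.cells = ν.cells) : μ = ν := by
  cases μ; cases ν; simpa using h

lemma card_bot : (⊥ : YoungDiagram).card = 0 := by
  show (⊥ : YoungDiagram).cells.card = 0
  rw [YoungDiagram.cells_bot]; rfl

lemma bot_of_card_eq_zero {μ : YoungDiagram} (h : μ.card = 0) : μ = ⊥ := by
  apply yd_ext
  rw [YoungDiagram.cells_bot]
  exact Finset.card_eq_zero.1 h

lemma ne_bot_of_card_pos {μ : YoungDiagram} (h : 0 < μ.card) : μ ≠ ⊥ := by
  intro hb; rw [hb, card_bot] at h; omega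

lemma insD_card {μ : YoungDiagram} {c : ℕ × ℕ} (h : Addable μ c) :
    (insD μ c h).card = μ.card + 1 := by
  show (insert c μ.cells).card = μ.cells.card + 1
  exact Finset.card_insert_of_notMem fun hc => h.1 ((YoungDiagram.mem_cells c).1 hc)

lemma dimAux_cells (μ : YoungDiagram) : dimAux μ.cells = dimSYT μ := by
  rw [dimAux_eq μ.cells μ.isLowerSet]

lemma removable_self_insD {μ : YoungDiagram} {c : ℕ × ℕ} (hc : Addable μ c) :
    Removable (insD μ c hc) c := by
  have hcn : c ∉ μ.cells := fun h => hc.1 ((YoungDiagram.mem_cells c).1 h)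
  constructor
  · show c ∈ (insD μ c hc).cells
    exact Finset.mem_insert_self c μ.cells
  · show IsLowerSet (↑((insert c μ.cells).erase c) : Set (ℕ × ℕ))
    rw [Finset.erase_insert hcn]
    exact μ.isLowerSet

lemma addable_self_ersD {μ : YoungDiagram} {d : ℕ × ℕ} (hd : Removable μ d) :
    Addable (ersD μ d hd) d := by
  constructor
  · show d ∉ (ersD μ d hd).cells
    exact Finset.notMem_erase d μ.cells
  · show IsLowerSet (↑(insert d (μ.cells.erase d)) : Set (ℕ × ℕ))
    rw [Finset.insert_erase (mem_cells_of_mem hd.1)]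
    exact μ.isLowerSet

lemma insert_erase_comm {s : Finset (ℕ × ℕ)} {c d : ℕ × ℕ} (h : c ≠ d) :
    insert c (s.erase d) = (insert c s).erase d := by
  ext x
  simp only [Finset.mem_insert, Finset.mem_erase]
  constructor
  · rintro (rfl | ⟨h1, h2⟩)
    · exact ⟨h, Or.inl rfl⟩
    · exact ⟨h1, Or.inr h2⟩
  · rintro ⟨h1, rfl | h2⟩
    · exact Or.inl rfl
    · exact Or.inr ⟨h1, h2⟩

lemma max_of_removable {μ : YoungDiagram} {c : ℕ × ℕ} (h : Removable μ c) {d : ℕ × ℕ}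
    (hd : d ∈ μ) (h1 : c.1 ≤ d.1) (h2 : c.2 ≤ d.2) : d = c := by
  by_contra hne
  have hde : d ∈ (↑(μ.cells.erase c) : Set (ℕ × ℕ)) := by
    simp only [Finset.coe_erase, Set.mem_diff, Set.mem_singleton_iff]
    exact ⟨by simpa using hd, hne⟩
  have : c ∈ (↑(μ.cells.erase c) : Set (ℕ × ℕ)) := h.2 (Prod.mk_le_mk.2 ⟨h1, h2⟩ : c ≤ d) hde
  simp at this

lemma erase_lower_of_max' {μ : YoungDiagram} {c : ℕ × ℕ}
    (hmax : ∀ d ∈ μ, c.1 ≤ d.1 → c.2 ≤ d.2 → d = c) :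
    IsLowerSet (↑(μ.cells.erase c) : Set (ℕ × ℕ)) := by
  intro a b hba ha
  simp only [Finset.coe_erase, Set.mem_diff, Set.mem_singleton_iff, Finset.mem_coe,
    YoungDiagram.mem_cells] at ha ⊢
  have hbμ : b ∈ μ := μ.isLowerSet hba ha.1
  refine ⟨hbμ, fun hbc => ?_⟩
  subst hbc
  exact ha.2 (hmax a ha.1 hba.1 hba.2)

lemma swap_fwd {μ : YoungDiagram} {c d : ℕ × ℕ} (hne : d ≠ c) (hc : Addable μ c)
    (hd' : Removable (insD μ c hc) d) :
    ∃ hrd : Removable μ d, Addable (ersD μ d hrd) c := by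
  have hcn : c ∉ μ.cells := fun h => hc.1 ((YoungDiagram.mem_cells c).1 h)
  have hdμ : d ∈ μ := by
    have : d ∈ (insD μ c hc).cells := mem_cells_of_mem hd'.1
    rcases Finset.mem_insert.1 this with h | h
    · exact absurd h hne
    · exact (YoungDiagram.mem_cells d).1 h
  have hrd : Removable μ d := by
    refine ⟨hdμ, erase_lower_of_max' ?_⟩
    intro e he h1 h2
    exact max_of_removable hd' (show e ∈ insD μ c hc from
      (YoungDiagram.mem_cells e).1 (Finset.mem_insert_of_mem (mem_cells_of_mem he))) h1 h2
  refine ⟨hrd, ?_, ?_⟩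
  · show c ∉ (ersD μ d hrd).cells
    intro h
    exact hcn (Finset.mem_of_mem_erase h)
  · show IsLowerSet (↑(insert c (μ.cells.erase d)) : Set (ℕ × ℕ))
    rw [insert_erase_comm (fun h => hne h.symm)]
    exact hd'.2

lemma swap_bwd {μ : YoungDiagram} {c d : ℕ × ℕ} (hne : c ≠ d) (hrd : Removable μ d)
    (hc' : Addable (ersD μ d hrd) c) :
    ∃ hca : Addable μ c, Removable (insD μ c hca) d := by
  have hdc : d ∈ μ.cells := mem_cells_of_mem hrd.1
  have hcnμ : c ∉ μ := by
    intro h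
    exact hc'.1 (show c ∈ (ersD μ d hrd).cells from
      Finset.mem_erase.2 ⟨hne, mem_cells_of_mem h⟩)
  have hca : Addable μ c := by
    refine ⟨hcnμ, ?_⟩
    have hcoe : (↑(insert c μ.cells) : Set (ℕ × ℕ)) =
        (↑μ.cells : Set (ℕ × ℕ)) ∪ (↑(insert c (μ.cells.erase d)) : Set (ℕ × ℕ)) := by
      ext x
      simp only [Finset.coe_insert, Set.mem_insert_iff, Finset.mem_coe, Set.mem_union,
        Finset.coe_erase, Set.mem_diff, Set.mem_singleton_iff, Finset.mem_insert,
        Finset.mem_erase]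
      constructor
      · rintro (rfl | h)
        · right; exact Or.inl rfl
        · exact Or.inl h
      · rintro (h | rfl | h)
        · exact Or.inr h
        · exact Or.inl rfl
        · exact Or.inr h.1
    rw [hcoe]
    exact μ.isLowerSet.union hc'.2
  refine ⟨hca, ?_, ?_⟩
  · show d ∈ insD μ c hca
    exact (YoungDiagram.mem_cells d).2 (Finset.mem_insert_of_mem hdc)
  · show IsLowerSet (↑((insert c μ.cells).erase d) : Set (ℕ × ℕ))
    rw [← insert_erase_comm hne]
    exact hc'.2

open scoped Classical in
noncomputable def remOf (s : Finset (ℕ × ℕ)) : Finset (ℕ × ℕ) :=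
  if h : IsLowerSet (↑s : Set (ℕ × ℕ)) then removables ⟨s, h⟩ else ∅

open scoped Classical in
noncomputable def addOf (s : Finset (ℕ × ℕ)) : Finset (ℕ × ℕ) :=
  if h : IsLowerSet (↑s : Set (ℕ × ℕ)) then addables ⟨s, h⟩ else ∅

lemma remOf_eq (ν : YoungDiagram) : remOf ν.cells = removables ν := by
  unfold remOf
  rw [dif_pos ν.isLowerSet]

lemma addOf_eq (ν : YoungDiagram) : addOf ν.cells = addables ν := by
  unfold addOf
  rw [dif_pos ν.isLowerSet]

lemma remOf_insert {μ : YoungDiagram} {c : ℕ × ℕ} (hc : Addable μ c) :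
    remOf (insert c μ.cells) = removables (insD μ c hc) := by
  unfold remOf
  rw [dif_pos hc.2]
  rfl

lemma addOf_erase {μ : YoungDiagram} {d : ℕ × ℕ} (hrd : Removable μ d) :
    addOf (μ.cells.erase d) = addables (ersD μ d hrd) := by
  unfold addOf
  rw [dif_pos hrd.2]
  rfl

lemma lemG : ∀ (n : ℕ) (μ : YoungDiagram), μ.card = n →
    ∑ c ∈ addables μ, dimAux (insert c μ.cells) = (μ.card + 1) * dimSYT μ := by
  intro n
  induction n using Nat.strong_induction_on with
  | _ n IH =>
    intro μ hn
    by_cases hbot : μ = ⊥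
    · subst hbot
      have h00 : Addable (⊥ : YoungDiagram) ((0, 0) : ℕ × ℕ) := by
        refine ⟨YoungDiagram.notMem_bot _, ?_⟩
        intro a b hba ha
        simp only [Finset.coe_insert, Set.mem_insert_iff, Finset.mem_coe,
          YoungDiagram.cells_bot, Finset.notMem_empty, or_false] at ha ⊢
        subst ha
        have h1 : b.1 = 0 := Nat.le_zero.1 hba.1
        have h2 : b.2 = 0 := Nat.le_zero.1 hba.2
        exact Prod.ext h1 h2
      have haddset : addables (⊥ : YoungDiagram) = {((0, 0) : ℕ × ℕ)} := by
        ext c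
        rw [mem_addables, Finset.mem_singleton]
        constructor
        · intro h
          by_contra hne
          have hc : c ∈ (↑(insert c (⊥ : YoungDiagram).cells) : Set (ℕ × ℕ)) := by simp
          have h00c : ((0, 0) : ℕ × ℕ) ∈ (↑(insert c (⊥ : YoungDiagram).cells) : Set (ℕ × ℕ)) :=
            h.2 (Prod.mk_le_mk.2 ⟨Nat.zero_le _, Nat.zero_le _⟩) hc
          simp only [Finset.coe_insert, Set.mem_insert_iff, Finset.mem_coe,
            YoungDiagram.cells_bot, Finset.notMem_empty, or_false] at h00c
          exact hne h00c.symm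
        · rintro rfl
          exact h00
      rw [haddset, Finset.sum_singleton, card_bot, dimSYT_bot]
      have h1 : dimAux (insert ((0,0) : ℕ × ℕ) (⊥ : YoungDiagram).cells)
          = dimSYT (insD ⊥ (0,0) h00) := dimAux_eq _ h00.2
      rw [h1]
      have hne1 : insD ⊥ ((0,0) : ℕ × ℕ) h00 ≠ ⊥ :=
        ne_bot_of_card_pos (by rw [insD_card]; omega)
      rw [lemA hne1]
      have hrem1 : removables (insD ⊥ ((0,0) : ℕ × ℕ) h00) = {((0,0) : ℕ × ℕ)} := by
        ext d
        rw [mem_removables, Finset.mem_singleton]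
        constructor
        · intro h
          have : d ∈ (insD ⊥ ((0,0) : ℕ × ℕ) h00).cells := mem_cells_of_mem h.1
          have : d ∈ insert ((0,0) : ℕ × ℕ) (⊥ : YoungDiagram).cells := this
          simp only [Finset.mem_insert, YoungDiagram.cells_bot, Finset.notMem_empty,
            or_false] at this
          exact this
        · rintro rfl
          exact removable_self_insD h00
      rw [hrem1, Finset.sum_singleton]
      have h2 : (insD ⊥ ((0,0) : ℕ × ℕ) h00).cells.erase ((0,0) : ℕ × ℕ)
          = (⊥ : YoungDiagram).cells := by
        show (insert ((0,0) : ℕ × ℕ) (⊥ : YoungDiagram).cells).erase ((0,0) : ℕ × ℕ) = _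
        rw [Finset.erase_insert (by simp [YoungDiagram.cells_bot])]
      rw [h2, dimAux_cells, dimSYT_bot]
    · have hpos : 0 < μ.card := card_pos_of_ne_bot hbot
      set D := dimSYT μ with hD
      have step1 : ∀ c ∈ addables μ, dimAux (insert c μ.cells)
          = D + ∑ d ∈ (remOf (insert c μ.cells)).erase c,
              dimAux ((insert c μ.cells).erase d) := by
        intro c hcmem
        have hc : Addable μ c := mem_addables.1 hcmem
        have hcn : c ∉ μ.cells := fun h => hc.1 ((YoungDiagram.mem_cells c).1 h)
        have hselfr : c ∈ removables (insD μ c hc) :=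
          mem_removables.2 (removable_self_insD hc)
        have h1 : dimAux (insert c μ.cells) = dimSYT (insD μ c hc) := dimAux_eq _ hc.2
        have h2 : insD μ c hc ≠ ⊥ := ne_bot_of_card_pos (by rw [insD_card]; omega)
        rw [h1, lemA h2, ← Finset.add_sum_erase _ _ hselfr, remOf_insert hc]
        congr 1
        show dimAux ((insert c μ.cells).erase c) = D
        rw [Finset.erase_insert hcn, dimAux_cells]
      have step2 :
          ∑ c ∈ addables μ, ∑ d ∈ (remOf (insert c μ.cells)).erase c,
              dimAux ((insert c μ.cells).erase d)
          = ∑ d ∈ removables μ, ∑ c ∈ (addOf (μ.cells.erase d)).erase d,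
              dimAux (insert c (μ.cells.erase d)) := by
        rw [Finset.sum_sigma', Finset.sum_sigma']
        refine Finset.sum_bij' (fun a _ => (⟨a.2, a.1⟩ : (_ : ℕ × ℕ) × ℕ × ℕ))
          (fun b _ => (⟨b.2, b.1⟩ : (_ : ℕ × ℕ) × ℕ × ℕ)) ?_ ?_ ?_ ?_ ?_
        · rintro ⟨c, d⟩ ha
          rw [Finset.mem_sigma] at ha
          obtain ⟨hc1, hd1⟩ := ha
          have hc : Addable μ c := mem_addables.1 hc1
          rw [Finset.mem_erase, remOf_insert hc] at hd1
          obtain ⟨hdc, hd2⟩ := hd1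
          obtain ⟨hrd, hca⟩ := swap_fwd hdc hc (mem_removables.1 hd2)
          rw [Finset.mem_sigma]
          refine ⟨mem_removables.2 hrd, ?_⟩
          rw [Finset.mem_erase, addOf_erase hrd]
          exact ⟨fun h => hdc h.symm, mem_addables.2 hca⟩
        · rintro ⟨d, c⟩ hb
          rw [Finset.mem_sigma] at hb
          obtain ⟨hd1, hc1⟩ := hb
          have hrd : Removable μ d := mem_removables.1 hd1
          rw [Finset.mem_erase, addOf_erase hrd] at hc1
          obtain ⟨hcd, hc2⟩ := hc1
          obtain ⟨hca, hrd'⟩ := swap_bwd hcd hrd (mem_addables.1 hc2)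
          rw [Finset.mem_sigma]
          refine ⟨mem_addables.2 hca, ?_⟩
          rw [Finset.mem_erase, remOf_insert hca]
          exact ⟨fun h => hcd h.symm, mem_removables.2 hrd'⟩
        · rintro ⟨c, d⟩ _
          rfl
        · rintro ⟨d, c⟩ _
          rfl
        · rintro ⟨c, d⟩ ha
          rw [Finset.mem_sigma, Finset.mem_erase] at ha
          have hcd : c ≠ d := fun h => ha.2.1 h.symm
          show dimAux ((insert c μ.cells).erase d) = dimAux (insert c (μ.cells.erase d))
          rw [insert_erase_comm hcd]
      have step3 : ∀ d ∈ removables μ,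
          D + ∑ c ∈ (addOf (μ.cells.erase d)).erase d, dimAux (insert c (μ.cells.erase d))
          = μ.card * dimAux (μ.cells.erase d) := by
        intro d hdmem
        have hrd : Removable μ d := mem_removables.1 hdmem
        have hself : d ∈ addables (ersD μ d hrd) := mem_addables.2 (addable_self_ersD hrd)
        have hDins : dimAux (insert d (μ.cells.erase d)) = D := by
          rw [Finset.insert_erase (mem_cells_of_mem hrd.1), dimAux_cells]
        rw [addOf_erase hrd, ← hDins,
          Finset.add_sum_erase _ (fun c => dimAux (insert c (μ.cells.erase d))) hself]
        have hcard : (ersD μ d hrd).card = n - 1 := ersD_card hrd (by omega)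
        have hih : ∑ c ∈ addables (ersD μ d hrd), dimAux (insert c (μ.cells.erase d))
            = ((ersD μ d hrd).card + 1) * dimSYT (ersD μ d hrd) :=
          IH (n - 1) (by omega) (ersD μ d hrd) hcard
        rw [hih, hcard]
        have hS : dimSYT (ersD μ d hrd) = dimAux (μ.cells.erase d) :=
          (dimAux_eq _ hrd.2).symm
        rw [hS]
        have hnn : n - 1 + 1 = μ.card := by omega
        rw [hnn]
      rw [Finset.sum_congr rfl step1, Finset.sum_add_distrib, Finset.sum_const,
        smul_eq_mul, card_addables, step2]
      have hsum3 : ∑ d ∈ removables μ,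
          (D + ∑ c ∈ (addOf (μ.cells.erase d)).erase d, dimAux (insert c (μ.cells.erase d)))
          = ∑ d ∈ removables μ, μ.card * dimAux (μ.cells.erase d) :=
        Finset.sum_congr rfl step3
      rw [Finset.sum_add_distrib, Finset.sum_const, smul_eq_mul, ← Finset.mul_sum] at hsum3
      rw [← lemA hbot] at hsum3
      have e1 : ((removables μ).card + 1) * D = (removables μ).card * D + D := by ring
      have e2 : (μ.card + 1) * D = μ.card * D + D := by ring
      rw [e1, e2]
      set X := (removables μ).card * D
      set Y := μ.card * D
      omega

lemma cell_lt_card {μ : YoungDiagram} {c : ℕ × ℕ} (h : c ∈ μ) :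
    c.1 < μ.card ∧ c.2 < μ.card := by
  obtain ⟨i, j⟩ := c
  constructor
  · have h1 : i < μ.colLen j := YoungDiagram.mem_iff_lt_colLen.1 h
    have h2 : μ.colLen j = (μ.col j).card := μ.colLen_eq_card
    have h3 : (μ.col j).card ≤ μ.cells.card :=
      Finset.card_le_card (Finset.filter_subset _ _)
    show i < μ.cells.card
    omega
  · have h1 : j < μ.rowLen i := YoungDiagram.mem_iff_lt_rowLen.1 h
    have h2 : μ.rowLen i = (μ.row i).card := μ.rowLen_eq_card
    have h3 : (μ.row i).card ≤ μ.cells.card :=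
      Finset.card_le_card (Finset.filter_subset _ _)
    show j < μ.cells.card
    omega

noncomputable instance fintypeP (n : ℕ) : Fintype {μ : YoungDiagram // μ.card = n} := by
  have hfin : Finite {μ : YoungDiagram // μ.card = n} := by
    refine Finite.of_injective
      (fun p : {μ : YoungDiagram // μ.card = n} =>
        (⟨p.1.cells, ?_⟩ :
          {s : Finset (ℕ × ℕ) // s ∈ (Finset.range n ×ˢ Finset.range n).powerset}))
      ?_
    · refine Finset.mem_powerset.2 fun c hc => ?_
      have hm : c ∈ p.1 := (YoungDiagram.mem_cells c).1 hc
      have hb := cell_lt_card hm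
      rw [p.2] at hb
      exact Finset.mem_product.2 ⟨Finset.mem_range.2 hb.1, Finset.mem_range.2 hb.2⟩
    · intro p q h
      exact Subtype.ext (yd_ext (congrArg Subtype.val h))
  exact Fintype.ofFinite _

lemma burnside (n : ℕ) :
    ∑ Λ : {μ : YoungDiagram // μ.card = n}, dimSYT Λ.1 ^ 2 = n.factorial := by
  induction n with
  | zero =>
    letI : Unique {μ : YoungDiagram // μ.card = 0} :=
      ⟨⟨⟨⊥, card_bot⟩⟩, fun Λ => Subtype.ext (bot_of_card_eq_zero Λ.2)⟩
    rw [Fintype.sum_unique]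
    have h1 : ((default : {μ : YoungDiagram // μ.card = 0}) : YoungDiagram) = ⊥ := rfl
    rw [h1, dimSYT_bot]
    rfl
  | succ n ih =>
    have hform : ∀ Λ : {μ : YoungDiagram // μ.card = n + 1},
        dimSYT Λ.1 ^ 2 = ∑ d ∈ removables Λ.1, dimSYT Λ.1 * dimAux (Λ.1.cells.erase d) := by
      intro Λ
      rw [pow_two]
      nth_rewrite 2 [lemA (ne_bot_of_card_pos (by rw [Λ.2]; omega))]
      rw [Finset.mul_sum]
    rw [Finset.sum_congr rfl fun Λ _ => hform Λ]
    rw [Finset.sum_sigma']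
    have hbij :
        ∑ a ∈ (Finset.univ : Finset {μ : YoungDiagram // μ.card = n + 1}).sigma
            (fun Λ => removables Λ.1), dimSYT a.1.1 * dimAux (a.1.1.cells.erase a.2)
        = ∑ b ∈ (Finset.univ : Finset {μ : YoungDiagram // μ.card = n}).sigma
            (fun μp => addables μp.1), dimAux (insert b.2 b.1.1.cells) * dimSYT b.1.1 := by
      refine Finset.sum_bij'
        (fun a ha => (⟨⟨ersD a.1.1 a.2 (mem_removables.1 (Finset.mem_sigma.1 ha).2),
          ersD_card (mem_removables.1 (Finset.mem_sigma.1 ha).2) a.1.2⟩, a.2⟩ :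
          (_ : {μ : YoungDiagram // μ.card = n}) × ℕ × ℕ))
        (fun b hb => (⟨⟨insD b.1.1 b.2 (mem_addables.1 (Finset.mem_sigma.1 hb).2),
          by rw [insD_card, b.1.2]⟩, b.2⟩ :
          (_ : {μ : YoungDiagram // μ.card = n + 1}) × ℕ × ℕ))
        ?_ ?_ ?_ ?_ ?_
      · intro a ha
        rw [Finset.mem_sigma]
        exact ⟨Finset.mem_univ _, mem_addables.2
          (addable_self_ersD (mem_removables.1 (Finset.mem_sigma.1 ha).2))⟩
      · intro b hb
        rw [Finset.mem_sigma]
        exact ⟨Finset.mem_univ _, mem_removables.2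
          (removable_self_insD (mem_addables.1 (Finset.mem_sigma.1 hb).2))⟩
      · intro a ha
        refine Sigma.ext ?_ ?_
        · apply Subtype.ext
          apply yd_ext
          show insert a.2 (a.1.1.cells.erase a.2) = a.1.1.cells
          exact Finset.insert_erase
            (mem_cells_of_mem (mem_removables.1 (Finset.mem_sigma.1 ha).2).1)
        · rfl
      · intro b hb
        refine Sigma.ext ?_ ?_
        · apply Subtype.ext
          apply yd_ext
          show (insert b.2 b.1.1.cells).erase b.2 = b.1.1.cells
          exact Finset.erase_insert
            (fun h => (mem_addables.1 (Finset.mem_sigma.1 hb).2).1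
              ((YoungDiagram.mem_cells b.2).1 h))
        · rfl
      · intro a ha
        have hrd := mem_removables.1 (Finset.mem_sigma.1 ha).2
        show dimSYT a.1.1 * dimAux (a.1.1.cells.erase a.2)
          = dimAux (insert a.2 (a.1.1.cells.erase a.2)) * dimSYT ⟨a.1.1.cells.erase a.2, hrd.2⟩
        rw [Finset.insert_erase (mem_cells_of_mem hrd.1), dimAux_cells, ← dimAux_eq _ hrd.2]
    have hsig2 : ∑ μp : {μ : YoungDiagram // μ.card = n}, ∑ c ∈ addables μp.1,
        dimAux (insert c μp.1.cells) * dimSYT μp.1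
        = ∑ b ∈ (Finset.univ : Finset {μ : YoungDiagram // μ.card = n}).sigma
            (fun μp => addables μp.1), dimAux (insert b.2 b.1.1.cells) * dimSYT b.1.1 :=
      Finset.sum_sigma' _ _ _
    rw [hbij, ← hsig2]
    have hper : ∀ μp : {μ : YoungDiagram // μ.card = n},
        ∑ c ∈ addables μp.1, dimAux (insert c μp.1.cells) * dimSYT μp.1
        = (n + 1) * dimSYT μp.1 ^ 2 := by
      intro μp
      rw [← Finset.sum_mul, lemG μp.1.card μp.1 rfl, μp.2, pow_two]
      ring
    rw [Finset.sum_congr rfl fun μp _ => hper μp, ← Finset.mul_sum, ih,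
      Nat.factorial_succ]

end YB

open YB

/-- If `2σ ∉ ℤ` and `L = min_{n∈ℤ} |2σ − n|²`, then for every `t ∈ ℂ` the sum of the
absolute values of the terms of the series defining `B(σ,t)` is at most `exp(2|t|/L)`;
in particular `|B(σ,t)| ≤ exp(2|t|/L)`. -/
theorem blockSeries_bound (σ : ℂ) (hσ : ∀ n : ℤ, 2 * σ ≠ (n : ℂ)) (L : ℝ)
    (hL : IsLeast {x : ℝ | ∃ n : ℤ, x = ‖2 * σ - (n : ℂ)‖ ^ 2} L) :
    ∀ t : ℂ,
      (Summable fun p : YoungDiagram × YoungDiagram => ‖blockTerm σ t p‖) ∧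
      (∑' p : YoungDiagram × YoungDiagram, ‖blockTerm σ t p‖)
        ≤ Real.exp (2 * ‖t‖ / L) ∧
      ‖∑' p : YoungDiagram × YoungDiagram, blockTerm σ t p‖
        ≤ Real.exp (2 * ‖t‖ / L) := by
  classical
  obtain ⟨⟨n0, hn0⟩, hlb⟩ := hL
  have hLpos : 0 < L := by
    have h1 : 2 * σ - (n0 : ℂ) ≠ 0 := sub_ne_zero.2 (hσ n0)
    have h2 : 0 < ‖2 * σ - (n0 : ℂ)‖ := norm_pos_iff.mpr h1
    rw [hn0]
    positivity
  have hLmem : ∀ k : ℤ, L ≤ ‖2 * σ - (k : ℂ)‖ ^ 2 := fun k => hlb ⟨k, rfl⟩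
  intro t
  set x := ‖t‖ with hxdef
  have hx : 0 ≤ x := norm_nonneg t
  set q := x / L with hqdef
  have hq0 : 0 ≤ q := div_nonneg hx hLpos.le
  -- the dominating function
  set H : YoungDiagram → ℝ := fun μ =>
    (dimSYT μ : ℝ) ^ 2 / ((μ.card.factorial : ℝ)) ^ 2 * q ^ μ.card with hHdef
  have hH0 : ∀ μ, 0 ≤ H μ := by
    intro μ
    apply mul_nonneg
    · positivity
    · positivity
  -- lower bound on the b-factor
  have hbF : ∀ l m : YoungDiagram,
      L ^ (l.card + m.card) ≤ ‖bFactor l m σ‖ ^ 2 := by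
    intro l m
    have h1 : ∀ c ∈ l.cells,
        L ≤ ‖(l.colLen c.2 : ℂ) - c.1 + m.rowLen c.1 - c.2 - 1 + 2 * σ‖ ^ 2 := by
      intro c _
      have hk : ((l.colLen c.2 : ℂ) - c.1 + m.rowLen c.1 - c.2 - 1 + 2 * σ)
          = 2 * σ - (((c.1 : ℤ) + c.2 + 1 - l.colLen c.2 - m.rowLen c.1 : ℤ) : ℂ) := by
        push_cast
        ring
      rw [hk]
      exact hLmem _
    have h2 : ∀ c ∈ m.cells,
        L ≤ ‖(m.colLen c.2 : ℂ) - c.1 + l.rowLen c.1 - c.2 - 1 - 2 * σ‖ ^ 2 := by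
      intro c _
      have hk : ((m.colLen c.2 : ℂ) - c.1 + l.rowLen c.1 - c.2 - 1 - 2 * σ)
          = -(2 * σ - (((m.colLen c.2 : ℤ) - c.1 + l.rowLen c.1 - c.2 - 1 : ℤ) : ℂ)) := by
        push_cast
        ring
      rw [hk, norm_neg]
      exact hLmem _
    rw [bFactor, norm_mul, mul_pow, norm_prod, norm_prod, ← Finset.prod_pow, ← Finset.prod_pow,
      pow_add]
    apply mul_le_mul
    · calc L ^ l.card = ∏ _c ∈ l.cells, L := by rw [Finset.prod_const]
        _ ≤ _ := Finset.prod_le_prod (fun _ _ => hLpos.le) h1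
    · calc L ^ m.card = ∏ _c ∈ m.cells, L := by rw [Finset.prod_const]
        _ ≤ _ := Finset.prod_le_prod (fun _ _ => hLpos.le) h2
    · exact pow_nonneg hLpos.le _
    · exact Finset.prod_nonneg fun c _ => by positivity
  -- term bound
  have hterm : ∀ p : YoungDiagram × YoungDiagram, ‖blockTerm σ t p‖ ≤ H p.1 * H p.2 := by
    intro p
    obtain ⟨l, m⟩ := p
    have hnorm : ‖blockTerm σ t (l, m)‖ =
        ((dimSYT l : ℝ) * dimSYT m / ((l.card.factorial : ℝ) * m.card.factorial)) ^ 2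
          * x ^ (l.card + m.card) / ‖bFactor l m σ‖ ^ 2 := by
      rw [blockTerm, norm_div, norm_mul, norm_pow, norm_pow, norm_div,
        norm_mul, norm_mul]
      simp [Complex.norm_natCast, hxdef]
    rw [hnorm]
    have hden : 0 < L ^ (l.card + m.card) := pow_pos hLpos _
    have hstep : ((dimSYT l : ℝ) * dimSYT m / ((l.card.factorial : ℝ) * m.card.factorial)) ^ 2
          * x ^ (l.card + m.card) / ‖bFactor l m σ‖ ^ 2
        ≤ ((dimSYT l : ℝ) * dimSYT m / ((l.card.factorial : ℝ) * m.card.factorial)) ^ 2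
          * x ^ (l.card + m.card) / L ^ (l.card + m.card) := by
      gcongr
      exact hbF l m
    refine hstep.trans (le_of_eq ?_)
    have hf1 : (l.card.factorial : ℝ) ≠ 0 := Nat.cast_ne_zero.2 l.card.factorial_ne_zero
    have hf2 : (m.card.factorial : ℝ) ≠ 0 := Nat.cast_ne_zero.2 m.card.factorial_ne_zero
    have hL0 : L ≠ 0 := ne_of_gt hLpos
    show _ = H l * H m
    rw [hHdef]
    dsimp only
    rw [hqdef, pow_add]
    field_simp
    have e1 : L ^ l.card * L⁻¹ ^ l.card = 1 := by rw [← mul_pow, mul_inv_cancel₀ hL0, one_pow]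
    have e2 : L ^ m.card * L⁻¹ ^ m.card = 1 := by rw [← mul_pow, mul_inv_cancel₀ hL0, one_pow]
    linear_combination
      (-((dimSYT l : ℝ) ^ 2 * (dimSYT m : ℝ) ^ 2 * x ^ l.card * x ^ m.card)
        * (L ^ m.card * L⁻¹ ^ m.card)) * e1
      - ((dimSYT l : ℝ) ^ 2 * (dimSYT m : ℝ) ^ 2 * x ^ l.card * x ^ m.card) * e2
  -- fiber sums
  have hfiber : ∀ n : ℕ,
      ∑ Λ : {μ : YoungDiagram // μ.card = n}, H Λ.1 = q ^ n / (n.factorial : ℝ) := by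
    intro n
    have h1 : ∀ Λ : {μ : YoungDiagram // μ.card = n},
        H Λ.1 = ((dimSYT Λ.1 : ℝ) ^ 2) * (q ^ n / ((n.factorial : ℝ)) ^ 2) := by
      intro Λ
      rw [hHdef]
      show (dimSYT Λ.1 : ℝ) ^ 2 / ((Λ.1.card.factorial : ℝ)) ^ 2 * q ^ Λ.1.card = _
      rw [Λ.2]
      ring
    rw [Finset.sum_congr rfl fun Λ _ => h1 Λ, ← Finset.sum_mul]
    have h2 : ∑ Λ : {μ : YoungDiagram // μ.card = n}, (dimSYT Λ.1 : ℝ) ^ 2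
        = (n.factorial : ℝ) := by
      rw [← burnside n]
      push_cast
      rfl
    rw [h2]
    have hf : (n.factorial : ℝ) ≠ 0 := Nat.cast_ne_zero.2 n.factorial_ne_zero
    field_simp
  -- partial sums of H
  have hHsum : ∀ s : Finset YoungDiagram, ∑ μ ∈ s, H μ ≤ Real.exp q := by
    intro s
    set N := (s.sup YoungDiagram.card) + 1 with hNdef
    set fib : ℕ → Finset YoungDiagram := fun n =>
      (Finset.univ : Finset {μ : YoungDiagram // μ.card = n}).image Subtype.val with hfibdef
    have hmemfib : ∀ n μ, μ ∈ fib n ↔ μ.card = n := by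
      intro n μ
      simp only [hfibdef, Finset.mem_image, Finset.mem_univ, true_and]
      constructor
      · rintro ⟨⟨ν, hν⟩, rfl⟩
        exact hν
      · intro h
        exact ⟨⟨μ, h⟩, rfl⟩
    have hsub : s ⊆ (Finset.range N).biUnion fib := by
      intro μ hμ
      rw [Finset.mem_biUnion]
      refine ⟨μ.card, Finset.mem_range.2 ?_, (hmemfib _ _).2 rfl⟩
      have := Finset.le_sup (f := YoungDiagram.card) hμ
      omega
    calc ∑ μ ∈ s, H μ ≤ ∑ μ ∈ (Finset.range N).biUnion fib, H μ :=
          Finset.sum_le_sum_of_subset_of_nonneg hsub fun μ _ _ => hH0 μ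
      _ = ∑ n ∈ Finset.range N, ∑ μ ∈ fib n, H μ := by
          rw [Finset.sum_biUnion]
          intro a _ b _ hab
          show Disjoint (fib a) (fib b)
          rw [Finset.disjoint_left]
          intro μ hμa hμb
          rw [hmemfib] at hμa hμb
          exact hab (hμa ▸ hμb)
      _ = ∑ n ∈ Finset.range N, q ^ n / (n.factorial : ℝ) := by
          refine Finset.sum_congr rfl fun n _ => ?_
          simp only [hfibdef]
          rw [Finset.sum_image (fun a _ b _ h => Subtype.ext h)]
          exact hfiber n
      _ ≤ Real.exp q := Real.sum_le_exp_of_nonneg hq0 N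
  -- partial sums of the norms
  have hmain : ∀ u : Finset (YoungDiagram × YoungDiagram),
      ∑ p ∈ u, ‖blockTerm σ t p‖ ≤ Real.exp (2 * x / L) := by
    intro u
    have hexp : Real.exp q * Real.exp q = Real.exp (2 * x / L) := by
      rw [← Real.exp_add]
      congr 1
      rw [hqdef]
      ring
    calc ∑ p ∈ u, ‖blockTerm σ t p‖ ≤ ∑ p ∈ u, H p.1 * H p.2 :=
          Finset.sum_le_sum fun p _ => hterm p
      _ ≤ ∑ p ∈ (u.image Prod.fst) ×ˢ (u.image Prod.snd), H p.1 * H p.2 := by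
          refine Finset.sum_le_sum_of_subset_of_nonneg ?_
            fun p _ _ => mul_nonneg (hH0 _) (hH0 _)
          intro p hp
          rw [Finset.mem_product]
          exact ⟨Finset.mem_image_of_mem _ hp, Finset.mem_image_of_mem _ hp⟩
      _ = (∑ μ ∈ u.image Prod.fst, H μ) * (∑ μ ∈ u.image Prod.snd, H μ) := by
          rw [Finset.sum_product, Finset.sum_mul_sum]
      _ ≤ Real.exp q * Real.exp q := by
          apply mul_le_mul (hHsum _) (hHsum _)
            (Finset.sum_nonneg fun μ _ => hH0 μ) (Real.exp_nonneg q)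
      _ = Real.exp (2 * x / L) := hexp
  have hsummable : Summable fun p : YoungDiagram × YoungDiagram => ‖blockTerm σ t p‖ :=
    summable_of_sum_le (fun p => norm_nonneg _) hmain
  refine ⟨hsummable, Summable.tsum_le_of_sum_le hsummable hmain, ?_⟩
  have h1 : ‖∑' p : YoungDiagram × YoungDiagram, blockTerm σ t p‖
      = ‖∑' p : YoungDiagram × YoungDiagram, blockTerm σ t p‖ := rfl
  rw [h1]
  exact (norm_tsum_le_tsum_norm hsummable).trans (Summable.tsum_le_of_sum_le hsummable hmain)
end

section
/- Let u : (0,∞) → ℂ be twice differentiable and satisfy the radial sine-Gordon equation u'' + u'/r + sin u = 0. Define ζ : (0,∞) → ℂ by ζ(2^{-12} r⁴) = (r²/16) · [ (i u'(r)/2 + 1/r)² + cos(u(r))/2 ] for r > 0. Then ζ satisfies the σ-form of the Painlevé III₃ equation: (t ζ''(t))² = 4 (ζ'(t))² (ζ(t) − t ζ'(t)) − 4 ζ'(t) for all t > 0. -/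
open Complex

private lemma hasDerivAt_ofReal' (r : ℝ) : HasDerivAt (fun x : ℝ => (x : ℂ)) 1 r := by
  have h := Complex.ofRealCLM.hasDerivAt (x := r)
  simp only [Complex.ofRealCLM_apply] at h
  exact h

private lemma aux_G0 (u du ddu : ℝ → ℂ) (r : ℝ)
    (hu : HasDerivAt u (du r) r) (hdu' : HasDerivAt du (ddu r) r)
    (hSG2 : (r : ℂ) * ddu r + du r + (r : ℂ) * Complex.sin (u r) = 0) :
    HasDerivAt (fun x : ℝ =>
        -((x : ℂ) * (x : ℂ) * (du x * du x) / 64) + Complex.I * ((x : ℂ) * du x) / 16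
          + (1 / 16 + (x : ℂ) * (x : ℂ) * Complex.cos (u x) / 32))
      (((r : ℂ) / 16) * (Complex.cos (u r) - Complex.I * Complex.sin (u r))) r := by
  have hR := hasDerivAt_ofReal' r
  have hsq := hR.mul hR
  have hdu2 := hdu'.mul hdu'
  have hcos : HasDerivAt (fun x => Complex.cos (u x)) (-Complex.sin (u r) * du r) r :=
    (Complex.hasDerivAt_cos (u r)).comp r hu
  have p1 := ((hsq.mul hdu2).div_const 64).neg
  have p2 := ((hR.mul hdu').const_mul Complex.I).div_const 16
  have p34 := ((hsq.mul hcos).div_const 32).const_add (1 / 16 : ℂ)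
  have h := (p1.add p2).add p34
  refine h.congr_deriv ?_
  simp only [Pi.mul_apply, Pi.sub_apply]
  linear_combination -((r : ℂ) * du r / 32 - Complex.I / 16) * hSG2

private lemma aux_F1 (u du : ℝ → ℂ) (r : ℝ) (hu : HasDerivAt u (du r) r) :
    HasDerivAt (fun x : ℝ =>
        ((x : ℂ) / 16) * (Complex.cos (u x) - Complex.I * Complex.sin (u x)))
      (((1 - Complex.I * (r : ℂ) * du r) / 16) *
        (Complex.cos (u r) - Complex.I * Complex.sin (u r))) r := by
  have hR := hasDerivAt_ofReal' r
  have hcos : HasDerivAt (fun x => Complex.cos (u x)) (-Complex.sin (u r) * du r) r :=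
    (Complex.hasDerivAt_cos (u r)).comp r hu
  have hsin : HasDerivAt (fun x => Complex.sin (u x)) (Complex.cos (u r) * du r) r :=
    (Complex.hasDerivAt_sin (u r)).comp r hu
  have h := (hR.div_const 16).mul (hcos.sub (hsin.const_mul Complex.I))
  refine h.congr_deriv ?_
  simp only [Pi.mul_apply, Pi.sub_apply]
  linear_combination -((r : ℂ) * du r * Complex.sin (u r) / 16) * Complex.I_sq

open Complex in
/-- If `u` solves the radial sine-Gordon equation `u'' + u'/r + sin u = 0` on `(0,∞)`
and `ζ(2^{-12}r⁴) = (r²/16)[(iu'/2 + 1/r)² + cos(u)/2]`, then `ζ` satisfies the σ-form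
of Painlevé III₃: `(tζ'')² = 4(ζ')²(ζ − tζ') − 4ζ'` on `(0,∞)`. -/
theorem sigma_form_PIII (u du ddu : ℝ → ℂ)
    (hdu : ∀ r ∈ Set.Ioi (0 : ℝ), HasDerivAt u (du r) r)
    (hddu : ∀ r ∈ Set.Ioi (0 : ℝ), HasDerivAt du (ddu r) r)
    (hSG : ∀ r ∈ Set.Ioi (0 : ℝ), ddu r + du r / (r : ℂ) + Complex.sin (u r) = 0)
    (ζ : ℝ → ℂ)
    (hζ : ∀ r ∈ Set.Ioi (0 : ℝ),
      ζ (2 ^ (-12 : ℤ) * r ^ 4) =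
        ((r : ℂ) ^ 2 / 16) *
          ((Complex.I * du r / 2 + 1 / (r : ℂ)) ^ 2 + Complex.cos (u r) / 2)) :
    ∃ dζ ddζ : ℝ → ℂ, ∀ t ∈ Set.Ioi (0 : ℝ),
      HasDerivAt ζ (dζ t) t ∧ HasDerivAt dζ (ddζ t) t ∧
      ((t : ℂ) * ddζ t) ^ 2 =
        4 * (dζ t) ^ 2 * (ζ t - (t : ℂ) * dζ t) - 4 * dζ t := by
  -- the building-block functions
  set F1f : ℝ → ℂ := fun x =>
    ((x : ℂ) / 16) * (Complex.cos (u x) - Complex.I * Complex.sin (u x)) with hF1f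
  set F2f : ℝ → ℂ := fun x =>
    ((1 - Complex.I * (x : ℂ) * du x) / 16) *
      (Complex.cos (u x) - Complex.I * Complex.sin (u x)) with hF2f
  set G0f : ℝ → ℂ := fun x =>
    -((x : ℂ) * (x : ℂ) * (du x * du x) / 64) + Complex.I * ((x : ℂ) * du x) / 16
      + (1 / 16 + (x : ℂ) * (x : ℂ) * Complex.cos (u x) / 32) with hG0f
  -- ζ agrees with G0f ∘ (8·t^{1/4}) on (0,∞)
  have hζ' : ∀ s ∈ Set.Ioi (0 : ℝ), ζ s = G0f (8 * s ^ ((1:ℝ)/4)) := by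
    intro s hs
    have hs0 : (0:ℝ) < s := hs
    have hx : (0:ℝ) < 8 * s ^ ((1:ℝ)/4) := by positivity
    have h1 := hζ _ (Set.mem_Ioi.mpr hx)
    have h2 : (2:ℝ) ^ (-12 : ℤ) * (8 * s ^ ((1:ℝ)/4)) ^ 4 = s := by
      rw [mul_pow, ← Real.rpow_natCast (s ^ ((1:ℝ)/4)) 4, ← Real.rpow_mul hs0.le]
      norm_num
      ring
    rw [h2] at h1
    rw [h1, hG0f]
    have hxC : ((8 * s ^ ((1:ℝ)/4) : ℝ) : ℂ) ≠ 0 := by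
      exact_mod_cast hx.ne'
    have hinv : ((8 * s ^ ((1:ℝ)/4) : ℝ) : ℂ) * (((8 * s ^ ((1:ℝ)/4) : ℝ) : ℂ))⁻¹ = 1 :=
      mul_inv_cancel₀ hxC
    linear_combination (((8 * s ^ ((1:ℝ)/4) : ℝ) : ℂ) ^ 2 * (du (8 * s ^ ((1:ℝ)/4))) ^ 2 / 64)
        * Complex.I_sq
      + (Complex.I * du (8 * s ^ ((1:ℝ)/4)) * ((8 * s ^ ((1:ℝ)/4) : ℝ) : ℂ) / 16
          + (((8 * s ^ ((1:ℝ)/4) : ℝ) : ℂ) * (((8 * s ^ ((1:ℝ)/4) : ℝ) : ℂ))⁻¹ + 1) / 16) * hinv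
  refine ⟨fun t' => (8 * (((1:ℝ)/4) * t' ^ ((1:ℝ)/4 - 1))) • F1f (8 * t' ^ ((1:ℝ)/4)),
    fun t' => (8 * (((1:ℝ)/4) * t' ^ ((1:ℝ)/4 - 1))) •
        ((8 * (((1:ℝ)/4) * t' ^ ((1:ℝ)/4 - 1))) • F2f (8 * t' ^ ((1:ℝ)/4)))
      + (8 * (((1:ℝ)/4) * ((((1:ℝ)/4) - 1) * t' ^ ((1:ℝ)/4 - 1 - 1)))) • F1f (8 * t' ^ ((1:ℝ)/4)),
    fun t ht => ?_⟩
  have ht0 : (0:ℝ) < t := ht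
  have hp0 : (0:ℝ) < t ^ ((1:ℝ)/4) := Real.rpow_pos_of_pos ht0 _
  have hr0 : (0:ℝ) < 8 * t ^ ((1:ℝ)/4) := by positivity
  have hmem : (8 * t ^ ((1:ℝ)/4)) ∈ Set.Ioi (0:ℝ) := Set.mem_Ioi.mpr hr0
  have hxC : ((8 * t ^ ((1:ℝ)/4) : ℝ) : ℂ) ≠ 0 := by exact_mod_cast hr0.ne'
  have hinv : ((8 * t ^ ((1:ℝ)/4) : ℝ) : ℂ) * (((8 * t ^ ((1:ℝ)/4) : ℝ) : ℂ))⁻¹ = 1 :=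
    mul_inv_cancel₀ hxC
  have hrpow : HasDerivAt (fun t' : ℝ => 8 * t' ^ ((1:ℝ)/4))
      (8 * (((1:ℝ)/4) * t ^ ((1:ℝ)/4 - 1))) t :=
    (Real.hasDerivAt_rpow_const (Or.inl ht0.ne')).const_mul 8
  have hSG2 : ((8 * t ^ ((1:ℝ)/4) : ℝ) : ℂ) * ddu (8 * t ^ ((1:ℝ)/4)) + du (8 * t ^ ((1:ℝ)/4))
      + ((8 * t ^ ((1:ℝ)/4) : ℝ) : ℂ) * Complex.sin (u (8 * t ^ ((1:ℝ)/4))) = 0 := by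
    have h := hSG _ hmem
    linear_combination ((8 * t ^ ((1:ℝ)/4) : ℝ) : ℂ) * h - du (8 * t ^ ((1:ℝ)/4)) * hinv
  have hG0d := aux_G0 u du ddu _ (hdu _ hmem) (hddu _ hmem) hSG2
  have hF1d := aux_F1 u du _ (hdu _ hmem)
  have hev : ζ =ᶠ[nhds t] fun t' => G0f (8 * t' ^ ((1:ℝ)/4)) :=
    Filter.eventuallyEq_of_mem (isOpen_Ioi.mem_nhds ht) hζ'
  have hcomp1 : HasDerivAt (fun t' => G0f (8 * t' ^ ((1:ℝ)/4)))
      ((8 * (((1:ℝ)/4) * t ^ ((1:ℝ)/4 - 1))) • F1f (8 * t ^ ((1:ℝ)/4))) t :=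
    HasDerivAt.scomp_of_eq t hG0d hrpow rfl
  have hd1 : HasDerivAt ζ ((8 * (((1:ℝ)/4) * t ^ ((1:ℝ)/4 - 1))) • F1f (8 * t ^ ((1:ℝ)/4))) t :=
    hev.hasDerivAt_iff.mpr hcomp1
  refine ⟨hd1, ?_, ?_⟩
  · have hc : HasDerivAt (fun t' : ℝ => 8 * (((1:ℝ)/4) * t' ^ ((1:ℝ)/4 - 1)))
        (8 * (((1:ℝ)/4) * ((((1:ℝ)/4) - 1) * t ^ ((1:ℝ)/4 - 1 - 1)))) t :=
      ((Real.hasDerivAt_rpow_const (Or.inl ht0.ne')).const_mul ((1:ℝ)/4)).const_mul 8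
    have hcomp2 : HasDerivAt (fun t' => F1f (8 * t' ^ ((1:ℝ)/4)))
        ((8 * (((1:ℝ)/4) * t ^ ((1:ℝ)/4 - 1))) • F2f (8 * t ^ ((1:ℝ)/4))) t :=
      HasDerivAt.scomp_of_eq t hF1d hrpow rfl
    exact hc.smul hcomp2
  · beta_reduce
    rw [hζ' t ht]
    have e3 : (t ^ ((1:ℝ)/4)) ^ (4:ℕ) = t := by
      rw [← Real.rpow_natCast (t ^ ((1:ℝ)/4)) 4, ← Real.rpow_mul ht0.le]
      norm_num
    have e1 : t ^ ((1:ℝ)/4 - 1) = (t ^ ((1:ℝ)/4))⁻¹ ^ 3 := by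
      rw [Real.rpow_sub ht0, Real.rpow_one]
      nth_rewrite 2 [← e3]
      field_simp [hp0.ne']
    have e2 : t ^ ((1:ℝ)/4 - 1 - 1) = (t ^ ((1:ℝ)/4))⁻¹ ^ 7 := by
      rw [Real.rpow_sub ht0, Real.rpow_sub ht0, Real.rpow_one]
      nth_rewrite 2 3 [← e3]
      field_simp [hp0.ne']
    have e4 : ((t : ℝ) : ℂ) = ((t ^ ((1:ℝ)/4) : ℝ) : ℂ) ^ 4 := by exact_mod_cast e3.symm
    rw [e1, e2]
    simp only [Complex.real_smul, hF1f, hF2f, hG0f]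
    push_cast
    rw [e4]
    have hPC : ((t ^ ((1:ℝ)/4) : ℝ) : ℂ) ≠ 0 := by
      exact_mod_cast hp0.ne'
    set PP : ℂ := ((t ^ ((1:ℝ)/4) : ℝ) : ℂ) with hPPdef
    set QQ : ℂ := PP⁻¹ with hQQdef
    set VV : ℂ := du (8 * t ^ ((1:ℝ)/4)) with hVVdef
    set SS : ℂ := Complex.sin (u (8 * t ^ ((1:ℝ)/4))) with hSSdef
    set CC : ℂ := Complex.cos (u (8 * t ^ ((1:ℝ)/4))) with hCCdef
    have hinvP : PP * QQ = 1 := mul_inv_cancel₀ hPC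
    have hsc : SS ^ 2 + CC ^ 2 = 1 := Complex.sin_sq_add_cos_sq (u (8 * t ^ ((1:ℝ)/4)))
    linear_combination ((4:ℂ) * CC * QQ^2 + (-4:ℂ) * CC^3 * QQ^2 + (-4:ℂ) * SS * Complex.I * QQ^2 + (4:ℂ) * SS * CC^2 * Complex.I * QQ^2 + (4:ℂ) * SS^2 * CC * Complex.I^2 * QQ^2 + (-4:ℂ) * SS^3 * Complex.I^3 * QQ^2 + (4:ℂ) * VV^2 * CC^2 * QQ^2 + (4:ℂ) * VV^2 * CC^2 * Complex.I^2 * QQ^2 + (-8:ℂ) * VV^2 * SS * CC * Complex.I * QQ^2 + (-8:ℂ) * VV^2 * SS * CC * Complex.I^3 * QQ^2 + (4:ℂ) * VV^2 * SS^2 * Complex.I^2 * QQ^2 + (4:ℂ) * VV^2 * SS^2 * Complex.I^4 * QQ^2 + (-4:ℂ) * PP * CC^3 * QQ^3 + (4:ℂ) * PP * SS * CC^2 * Complex.I * QQ^3 + (4:ℂ) * PP * SS^2 * CC * Complex.I^2 * QQ^3 + (-4:ℂ) * PP * SS^3 * Complex.I^3 * QQ^3 + (4:ℂ) * PP * VV^2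 * CC^2 * QQ^3 + (4:ℂ) * PP * VV^2 * CC^2 * Complex.I^2 * QQ^3 + (-8:ℂ) * PP * VV^2 * SS * CC * Complex.I * QQ^3 + (-8:ℂ) * PP * VV^2 * SS * CC * Complex.I^3 * QQ^3 + (4:ℂ) * PP * VV^2 * SS^2 * Complex.I^2 * QQ^3 + (4:ℂ) * PP * VV^2 * SS^2 * Complex.I^4 * QQ^3 + (1/4:ℂ) * PP^2 * CC^2 * QQ^6 + (-4:ℂ) * PP^2 * CC^3 * QQ^4 + (-1/2:ℂ) * PP^2 * SS * CC * Complex.I * QQ^6 + (4:ℂ) * PP^2 * SS * CC^2 * Complex.I * QQ^4 + (1/4:ℂ) * PP^2 * SS^2 * Complex.I^2 * QQ^6 + (4:ℂ) * PP^2 * SS^2 * CC * Complex.I^2 * QQ^4 + (-4:ℂ) * PP^2 * SS^3 * Complex.I^3 * QQ^4 + (4:ℂ) * PP^2 * VV^2 * CC^2 * QQ^4 + (4:ℂ) * PP^2 * VV^2 * CC^2 * Complex.I^2 * QQ^4 + (-8:ℂ) * PP^2 * VV^2 * SS * CC * Complex.I * QQ^4 + (-8:ℂ) * PP^2 * VV^2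 * SS * CC * Complex.I^3 * QQ^4 + (4:ℂ) * PP^2 * VV^2 * SS^2 * Complex.I^2 * QQ^4 + (4:ℂ) * PP^2 * VV^2 * SS^2 * Complex.I^4 * QQ^4 + (1/4:ℂ) * PP^3 * CC^2 * QQ^7 + (-4:ℂ) * PP^3 * CC^3 * QQ^5 + (-1/2:ℂ) * PP^3 * SS * CC * Complex.I * QQ^7 + (4:ℂ) * PP^3 * SS * CC^2 * Complex.I * QQ^5 + (1/4:ℂ) * PP^3 * SS^2 * Complex.I^2 * QQ^7 + (4:ℂ) * PP^3 * SS^2 * CC * Complex.I^2 * QQ^5 + (-4:ℂ) * PP^3 * SS^3 * Complex.I^3 * QQ^5 + (2:ℂ) * PP^3 * VV * CC^2 * Complex.I * QQ^6 + (-4:ℂ) * PP^3 * VV * SS * CC * Complex.I^2 * QQ^6 + (2:ℂ) * PP^3 * VV * SS^2 * Complex.I^3 * QQ^6 + (4:ℂ) * PP^3 * VV^2 * CC^2 * QQ^5 + (4:ℂ) * PP^3 * VV^2 * CC^2 * Complex.I^2 * QQ^5 + (-8:ℂ) * PP^3 * VV^2 * SS * CC * Complex.I * QQ^5 + (-8:ℂ)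 * PP^3 * VV^2 * SS * CC * Complex.I^3 * QQ^5 + (4:ℂ) * PP^3 * VV^2 * SS^2 * Complex.I^2 * QQ^5 + (4:ℂ) * PP^3 * VV^2 * SS^2 * Complex.I^4 * QQ^5 + (1/4:ℂ) * PP^4 * CC^2 * QQ^8 + (4:ℂ) * PP^4 * CC^3 * QQ^6 + (-1/2:ℂ) * PP^4 * SS * CC * Complex.I * QQ^8 + (-12:ℂ) * PP^4 * SS * CC^2 * Complex.I * QQ^6 + (1/4:ℂ) * PP^4 * SS^2 * Complex.I^2 * QQ^8 + (12:ℂ) * PP^4 * SS^2 * CC * Complex.I^2 * QQ^6 + (-4:ℂ) * PP^4 * SS^3 * Complex.I^3 * QQ^6 + (2:ℂ) * PP^4 * VV * CC^2 * Complex.I * QQ^7 + (-4:ℂ) * PP^4 * VV * SS * CC * Complex.I^2 * QQ^7 + (2:ℂ) * PP^4 * VV * SS^2 * Complex.I^3 * QQ^7 + (4:ℂ) * PP^4 * VV^2 * CC^2 * Complex.I^2 * QQ^6 + (-8:ℂ) * PP^4 * VV^2 * SS * CC * Complex.I^3 * QQ^6 + (4:ℂ) * PP^4 * VV^2 * SS^2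 * Complex.I^4 * QQ^6 + (1/4:ℂ) * PP^5 * CC^2 * QQ^9 + (4:ℂ) * PP^5 * CC^3 * QQ^7 + (-1/2:ℂ) * PP^5 * SS * CC * Complex.I * QQ^9 + (-12:ℂ) * PP^5 * SS * CC^2 * Complex.I * QQ^7 + (1/4:ℂ) * PP^5 * SS^2 * Complex.I^2 * QQ^9 + (12:ℂ) * PP^5 * SS^2 * CC * Complex.I^2 * QQ^7 + (-4:ℂ) * PP^5 * SS^3 * Complex.I^3 * QQ^7 + (2:ℂ) * PP^5 * VV * CC^2 * Complex.I * QQ^8 + (-4:ℂ) * PP^5 * VV * SS * CC * Complex.I^2 * QQ^8 + (2:ℂ) * PP^5 * VV * SS^2 * Complex.I^3 * QQ^8 + (4:ℂ) * PP^5 * VV^2 * CC^2 * Complex.I^2 * QQ^7 + (-8:ℂ) * PP^5 * VV^2 * SS * CC * Complex.I^3 * QQ^7 + (4:ℂ) * PP^5 * VV^2 * SS^2 * Complex.I^4 * QQ^7 + (1/4:ℂ) * PP^6 * CC^2 * QQ^10 + (4:ℂ) * PP^6 * CC^3 * QQ^8 + (-1/2:ℂ) * PP^6 * SS * CC * Complex.I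 * QQ^10 + (-12:ℂ) * PP^6 * SS * CC^2 * Complex.I * QQ^8 + (1/4:ℂ) * PP^6 * SS^2 * Complex.I^2 * QQ^10 + (12:ℂ) * PP^6 * SS^2 * CC * Complex.I^2 * QQ^8 + (-4:ℂ) * PP^6 * SS^3 * Complex.I^3 * QQ^8 + (2:ℂ) * PP^6 * VV * CC^2 * Complex.I * QQ^9 + (-4:ℂ) * PP^6 * VV * SS * CC * Complex.I^2 * QQ^9 + (2:ℂ) * PP^6 * VV * SS^2 * Complex.I^3 * QQ^9 + (4:ℂ) * PP^6 * VV^2 * CC^2 * Complex.I^2 * QQ^8 + (-8:ℂ) * PP^6 * VV^2 * SS * CC * Complex.I^3 * QQ^8 + (4:ℂ) * PP^6 * VV^2 * SS^2 * Complex.I^4 * QQ^8 + (1/4:ℂ) * PP^7 * CC^2 * QQ^11 + (-1/2:ℂ) * PP^7 * SS * CC * Complex.I * QQ^11 + (1/4:ℂ) * PP^7 * SS^2 * Complex.I^2 * QQ^11 + (2:ℂ) * PP^7 * VV * CC^2 * Complex.I * QQ^10 + (-4:ℂ) * PP^7 * VV * SS * CC * Complex.I^2 * QQ^10 + (2:ℂ)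 * PP^7 * VV * SS^2 * Complex.I^3 * QQ^10 + (4:ℂ) * PP^7 * VV^2 * CC^2 * Complex.I^2 * QQ^9 + (-8:ℂ) * PP^7 * VV^2 * SS * CC * Complex.I^3 * QQ^9 + (4:ℂ) * PP^7 * VV^2 * SS^2 * Complex.I^4 * QQ^9 + (3/16:ℂ) * PP^8 * CC^2 * QQ^12 + (-3/8:ℂ) * PP^8 * SS * CC * Complex.I * QQ^12 + (3/16:ℂ) * PP^8 * SS^2 * Complex.I^2 * QQ^12 + (2:ℂ) * PP^8 * VV * CC^2 * Complex.I * QQ^11 + (-4:ℂ) * PP^8 * VV * SS * CC * Complex.I^2 * QQ^11 + (2:ℂ) * PP^8 * VV * SS^2 * Complex.I^3 * QQ^11 + (4:ℂ) * PP^8 * VV^2 * CC^2 * Complex.I^2 * QQ^10 + (-8:ℂ) * PP^8 * VV^2 * SS * CC * Complex.I^3 * QQ^10 + (4:ℂ) * PP^8 * VV^2 * SS^2 * Complex.I^4 * QQ^10 + (9/16:ℂ) * PP^9 * CC^2 * QQ^13 + (-9/8:ℂ) * PP^9 * SS * CC * Complex.I * QQ^13 + (9/16:ℂ) * PP^9 *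 SS^2 * Complex.I^2 * QQ^13 + (3:ℂ) * PP^9 * VV * CC^2 * Complex.I * QQ^12 + (-6:ℂ) * PP^9 * VV * SS * CC * Complex.I^2 * QQ^12 + (3:ℂ) * PP^9 * VV * SS^2 * Complex.I^3 * QQ^12 + (4:ℂ) * PP^9 * VV^2 * CC^2 * Complex.I^2 * QQ^11 + (-8:ℂ) * PP^9 * VV^2 * SS * CC * Complex.I^3 * QQ^11 + (4:ℂ) * PP^9 * VV^2 * SS^2 * Complex.I^4 * QQ^11) * hinvP + ((4:ℂ) * SS^2 * CC * QQ^2 + (-4:ℂ) * SS^3 * Complex.I * QQ^2 + (4:ℂ) * VV^2 * CC^2 * QQ^2 + (-8:ℂ) * VV^2 * SS * CC * Complex.I * QQ^2 + (4:ℂ) * VV^2 * SS^2 * Complex.I^2 * QQ^2) * Complex.I_sq + ((-4:ℂ) * CC * QQ^2 + (4:ℂ) * SS * Complex.I * QQ^2) * hsc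
end

section
/- Let u : (0,∞) → ℂ be twice differentiable and satisfy the radial sine-Gordon equation u'' + u'/r + sin u = 0. Define q : (0,∞) → ℂ by q(2^{-6} r²) = −e^{i u(r)} for r > 0. Then q satisfies the Painlevé III₃ equation in standard form: q''(s) = (q'(s))²/q(s) − q'(s)/s + 8(q(s)² − 1)/s for all s > 0. -/
/-- If `u` solves the radial sine-Gordon equation `u'' + u'/r + sin u = 0` on `(0,∞)`
and `q(2^{-6}r²) = −e^{iu(r)}`, then `q` satisfies Painlevé III₃ in standard form:
`q'' = (q')²/q − q'/s + 8(q² − 1)/s` on `(0,∞)`. -/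
theorem standard_form_PIII (u du ddu : ℝ → ℂ)
    (hdu : ∀ r ∈ Set.Ioi (0 : ℝ), HasDerivAt u (du r) r)
    (hddu : ∀ r ∈ Set.Ioi (0 : ℝ), HasDerivAt du (ddu r) r)
    (hSG : ∀ r ∈ Set.Ioi (0 : ℝ), ddu r + du r / (r : ℂ) + Complex.sin (u r) = 0)
    (q : ℝ → ℂ)
    (hq : ∀ r ∈ Set.Ioi (0 : ℝ),
      q (2 ^ (-6 : ℤ) * r ^ 2) = -Complex.exp (Complex.I * u r)) :
    ∃ dq ddq : ℝ → ℂ, ∀ s ∈ Set.Ioi (0 : ℝ),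
      HasDerivAt q (dq s) s ∧ HasDerivAt dq (ddq s) s ∧
      ddq s = (dq s) ^ 2 / q s - dq s / (s : ℂ) + 8 * (q s ^ 2 - 1) / (s : ℂ) := by
  refine ⟨fun t => -(Complex.exp (Complex.I * u (8 * Real.sqrt t)) *
      (Complex.I * (((8 * (1 / (2 * Real.sqrt t)) : ℝ) : ℂ) * du (8 * Real.sqrt t)))),
    fun t => -((Complex.exp (Complex.I * u (8 * Real.sqrt t)) *
        (Complex.I * (((8 * (1 / (2 * Real.sqrt t)) : ℝ) : ℂ) * du (8 * Real.sqrt t)))) *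
        (Complex.I * (((8 * (1 / (2 * Real.sqrt t)) : ℝ) : ℂ) * du (8 * Real.sqrt t))) +
      Complex.exp (Complex.I * u (8 * Real.sqrt t)) *
        (Complex.I * ((((4 * (-(1 / (2 * Real.sqrt t)) / (Real.sqrt t) ^ 2) : ℝ) : ℂ)
              * du (8 * Real.sqrt t)) +
          ((8 * (1 / (2 * Real.sqrt t)) : ℝ) : ℂ) *
            (((8 * (1 / (2 * Real.sqrt t)) : ℝ) : ℂ) * ddu (8 * Real.sqrt t))))),
    fun s hs => ?_⟩
  have hs0 : (0:ℝ) < s := hs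
  have hrs : 0 < Real.sqrt s := Real.sqrt_pos.mpr hs0
  have hne : Real.sqrt s ≠ 0 := ne_of_gt hrs
  have hrpos : 8 * Real.sqrt s ∈ Set.Ioi (0:ℝ) := by simp [Set.mem_Ioi]; positivity
  -- q agrees with the explicit formula on Ioi 0
  have hagree : ∀ t ∈ Set.Ioi (0:ℝ),
      q t = -Complex.exp (Complex.I * u (8 * Real.sqrt t)) := by
    intro t ht
    have ht0 : (0:ℝ) < t := ht
    have h := hq (8 * Real.sqrt t) (by simp [Set.mem_Ioi]; positivity)
    rw [show (2:ℝ) ^ (-6:ℤ) * (8 * Real.sqrt t) ^ 2 = t by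
      rw [mul_pow, Real.sq_sqrt ht0.le]; norm_num; ring] at h
    exact h
  -- derivative of the inner real map t ↦ 8√t
  have hr : HasDerivAt (fun t => 8 * Real.sqrt t) (8 * (1 / (2 * Real.sqrt s))) s :=
    (Real.hasDerivAt_sqrt hs0.ne').const_mul 8
  -- derivative of t ↦ u (8√t)
  have hu1 : HasDerivAt (fun t => u (8 * Real.sqrt t))
      (((8 * (1 / (2 * Real.sqrt s)) : ℝ) : ℂ) * du (8 * Real.sqrt s)) s := by
    have := (hdu _ hrpos).scomp s hr
    rwa [Complex.real_smul] at this
  -- derivative of t ↦ du (8√t)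
  have hB : HasDerivAt (fun t => du (8 * Real.sqrt t))
      (((8 * (1 / (2 * Real.sqrt s)) : ℝ) : ℂ) * ddu (8 * Real.sqrt s)) s := by
    have := (hddu _ hrpos).scomp s hr
    rwa [Complex.real_smul] at this
  -- derivative of t ↦ ↑(8 * (1/(2√t)))
  have hC : HasDerivAt (fun t => ((8 * (1 / (2 * Real.sqrt t)) : ℝ) : ℂ))
      (((4 * (-(1 / (2 * Real.sqrt s)) / (Real.sqrt s) ^ 2) : ℝ) : ℂ)) s := by
    have h1 : HasDerivAt (fun t : ℝ => 8 * (1 / (2 * Real.sqrt t)))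
        (4 * (-(1 / (2 * Real.sqrt s)) / (Real.sqrt s) ^ 2)) s := by
      have h2 : HasDerivAt (fun t : ℝ => (Real.sqrt t)⁻¹)
          (-(1 / (2 * Real.sqrt s)) / (Real.sqrt s) ^ 2) s :=
        (Real.hasDerivAt_sqrt hs0.ne').inv hne
      have h3 := h2.const_mul (4 : ℝ)
      convert h3 using 2 with t
      · rfl
      · rfl
      rw [one_div, mul_inv]; ring
    exact h1.ofReal_comp
  have hA : HasDerivAt (fun t => Complex.exp (Complex.I * u (8 * Real.sqrt t)))
      (Complex.exp (Complex.I * u (8 * Real.sqrt s)) *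
        (Complex.I * (((8 * (1 / (2 * Real.sqrt s)) : ℝ) : ℂ) * du (8 * Real.sqrt s)))) s :=
    (hu1.const_mul Complex.I).cexp
  -- q has derivative dq s at s
  have hev : (fun t => -Complex.exp (Complex.I * u (8 * Real.sqrt t))) =ᶠ[nhds s] q :=
    Filter.eventuallyEq_of_mem (isOpen_Ioi.mem_nhds hs) (fun t ht => (hagree t ht).symm)
  have hq1 : HasDerivAt q
      (-(Complex.exp (Complex.I * u (8 * Real.sqrt s)) *
        (Complex.I * (((8 * (1 / (2 * Real.sqrt s)) : ℝ) : ℂ) * du (8 * Real.sqrt s))))) s :=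
    hev.hasDerivAt_iff.mp hA.neg
  have hq2 := ((hA.mul ((hC.mul hB).const_mul Complex.I)).neg)
  refine ⟨hq1, hq2, ?_⟩
  -- the algebraic identity
  have hqs := hagree s hs
  have hSGs := hSG _ hrpos
  have hsin : Complex.sin (u (8 * Real.sqrt s)) =
      ((Complex.exp (Complex.I * u (8 * Real.sqrt s)))⁻¹ -
        Complex.exp (Complex.I * u (8 * Real.sqrt s))) * Complex.I / 2 := by
    have h0 : Complex.sin (u (8 * Real.sqrt s)) =
        (Complex.exp (-(u (8 * Real.sqrt s)) * Complex.I) -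
         Complex.exp ((u (8 * Real.sqrt s)) * Complex.I)) * Complex.I / 2 := rfl
    rw [h0, neg_mul, Complex.exp_neg, mul_comm (u (8 * Real.sqrt s)) Complex.I]
  have hDD : ddu (8 * Real.sqrt s) =
      -(du (8 * Real.sqrt s) / ((8 * Real.sqrt s : ℝ) : ℂ)) -
      ((Complex.exp (Complex.I * u (8 * Real.sqrt s)))⁻¹ -
        Complex.exp (Complex.I * u (8 * Real.sqrt s))) * Complex.I / 2 := by
    rw [← hsin]; linear_combination hSGs
  have hE : Complex.exp (Complex.I * u (8 * Real.sqrt s)) ≠ 0 := Complex.exp_ne_zero _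
  have hrsC : ((Real.sqrt s : ℝ) : ℂ) ≠ 0 := by exact_mod_cast hne
  have hsC : ((s:ℝ):ℂ) = ((Real.sqrt s : ℝ) : ℂ) ^ 2 := by
    norm_cast; exact (Real.sq_sqrt hs0.le).symm
  simp only [hqs, hDD, hsC]
  push_cast
  set E := Complex.exp (Complex.I * u (8 * Real.sqrt s)) with hEdef
  set D := du (8 * Real.sqrt s) with hDdef
  set w := ((Real.sqrt s : ℝ) : ℂ) with hwdef
  obtain ⟨G, hG⟩ : ∃ G, G = E⁻¹ := ⟨_, rfl⟩
  rw [← hG]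
  have hEG : E * G = 1 := by rw [hG, mul_inv_cancel₀ hE]
  have hEE : E ^ 2 * E⁻¹ = E := by rw [sq, mul_assoc, mul_inv_cancel₀ hE, mul_one]
  linear_combination (-8 / (w ^ 2)) * hEG + (16 * Complex.I ^ 2 * D ^ 2 / w ^ 2) * hEE +
    (8 * E * G / w ^ 2 - 8 * E ^ 2 / w ^ 2) * Complex.I_sq
end

section
/- Let u : (0,∞) → ℂ be twice differentiable and satisfy the radial sine-Gordon equation u'' + u'/r + sin u = 0. Define h(r) = (r/4)[(i u'(r)/2 + 1/r)² + cos(u(r))/2]. Then for all r > 0, (4/r) · d/dr ( r · h(r) ) = e^{−i u(r)}. -/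
set_option maxHeartbeats 1000000 in
/-- If `u` solves the radial sine-Gordon equation `u'' + u'/r + sin u = 0` on `(0,∞)`
and `h(r) = (r/4)[(iu'(r)/2 + 1/r)² + cos(u(r))/2]`, then
`(4/r) d/dr (r h(r)) = e^{−iu(r)}` for all `r > 0`. -/
theorem tau_log_deriv_inversion (u du ddu : ℝ → ℂ)
    (hdu : ∀ r ∈ Set.Ioi (0 : ℝ), HasDerivAt u (du r) r)
    (hddu : ∀ r ∈ Set.Ioi (0 : ℝ), HasDerivAt du (ddu r) r)
    (hSG : ∀ r ∈ Set.Ioi (0 : ℝ), ddu r + du r / (r : ℂ) + Complex.sin (u r) = 0)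
    (h : ℝ → ℂ)
    (hh : ∀ r ∈ Set.Ioi (0 : ℝ),
      h r = ((r : ℂ) / 4) *
        ((Complex.I * du r / 2 + 1 / (r : ℂ)) ^ 2 + Complex.cos (u r) / 2)) :
    ∀ r ∈ Set.Ioi (0 : ℝ), ∃ d : ℂ,
      HasDerivAt (fun x : ℝ => (x : ℂ) * h x) d r ∧
      (4 / (r : ℂ)) * d = Complex.exp (-(Complex.I * u r)) := by
  intro r hr
  have hr0 : (0 : ℝ) < r := hr
  have hrc : (r : ℂ) ≠ 0 := by exact_mod_cast hr0.ne'
  have hcoe : HasDerivAt (fun y : ℝ => (y : ℂ)) 1 r := by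
    simpa using (hasDerivAt_id r).ofReal_comp
  -- P x = I * x * du x + 2
  have hP : HasDerivAt (fun x : ℝ => Complex.I * ((x : ℂ) * du x) + 2)
      (Complex.I * (1 * du r + (r : ℂ) * ddu r)) r :=
    ((hcoe.mul (hddu r hr)).const_mul Complex.I).add_const 2
  have hP2 := (hP.mul hP).div_const 16
  have hcosu : HasDerivAt (fun x : ℝ => Complex.cos (u x))
      (-Complex.sin (u r) * du r) r :=
    (Complex.hasDerivAt_cos (u r)).comp r (hdu r hr)
  have hQ := ((hcoe.mul hcoe).mul hcosu).div_const 8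
  have hG := hP2.add hQ
  refine ⟨_, hG.congr_of_eventuallyEq ?_, ?_⟩
  · filter_upwards [Ioi_mem_nhds hr0] with x hx
    have hxc : (x : ℂ) ≠ 0 := by exact_mod_cast (Set.mem_Ioi.mp hx).ne'
    rw [hh x hx]
    field_simp
    simp only [Pi.add_apply, Pi.mul_apply, Pi.pow_apply]
    ring
  · have hSGr : ddu r = -(du r / (r : ℂ)) - Complex.sin (u r) := by
      linear_combination hSG r hr
    have hexp : Complex.exp (-(Complex.I * u r)) =
        Complex.cos (u r) - Complex.sin (u r) * Complex.I := by
      rw [show -(Complex.I * u r) = (-(u r)) * Complex.I by ring, Complex.exp_mul_I,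
        Complex.cos_neg, Complex.sin_neg]
      ring
    rw [hexp, hSGr]
    field_simp
    ring_nf
    simp only [Complex.I_sq, Pi.mul_apply]
    ring
end

section
/- Let U ⊆ ℂ² be open and let η, ρ : U → ℂ be differentiable functions of (σ,ν) satisfying sin(2πη(σ,ν)) = e^{πν} sin(2πσ) and e^{4πiρ(σ,ν)} sin(2π(σ+η(σ,ν))) = sin(2πη(σ,ν)) on U, and assume cos(2πη), sin(2πσ), sin(2π(σ+η)) do not vanish on U. Then on U: (i) ∂η/∂σ = cot(2πσ) tan(2πη); (ii) ∂η/∂ν = tan(2πη)/2; (iii) ∂ρ/∂σ = −(i/2) tan(2πη), so that ∂η/∂ν = i ∂ρ/∂σ; (iv) ∂ρ/∂ν = sin(2πσ) / (4i cos(2πη) sin(2π(σ+η))). -/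
open Complex

/-- If `η(σ,ν)` and `ρ(σ,ν)` are differentiable local solutions on an open set `U` of
`sin 2πη = e^{πν} sin 2πσ` and `e^{4πiρ} sin 2π(σ+η) = sin 2πη`, with
`cos 2πη`, `sin 2πσ`, `sin 2π(σ+η)` nonvanishing, then their partial derivatives are
given by: `∂η/∂σ = cot 2πσ tan 2πη`, `∂η/∂ν = tan(2πη)/2`,
`∂ρ/∂σ = −(i/2) tan 2πη` (so `∂η/∂ν = i ∂ρ/∂σ`), and
`∂ρ/∂ν = sin 2πσ / (4i cos 2πη sin 2π(σ+η))`. -/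
theorem monodromy_coordinate_derivatives (U : Set (ℂ × ℂ)) (hU : IsOpen U)
    (η ρ ησ ην ρσ ρν : ℂ → ℂ → ℂ)
    (hησ : ∀ p ∈ U, HasDerivAt (fun s => η s p.2) (ησ p.1 p.2) p.1)
    (hην : ∀ p ∈ U, HasDerivAt (fun n => η p.1 n) (ην p.1 p.2) p.2)
    (hρσ : ∀ p ∈ U, HasDerivAt (fun s => ρ s p.2) (ρσ p.1 p.2) p.1)
    (hρν : ∀ p ∈ U, HasDerivAt (fun n => ρ p.1 n) (ρν p.1 p.2) p.2)
    (hrel1 : ∀ p ∈ U, Complex.sin (2 * Real.pi * η p.1 p.2) =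
      Complex.exp (Real.pi * p.2) * Complex.sin (2 * Real.pi * p.1))
    (hrel2 : ∀ p ∈ U, Complex.exp (4 * Real.pi * Complex.I * ρ p.1 p.2) *
      Complex.sin (2 * Real.pi * (p.1 + η p.1 p.2)) = Complex.sin (2 * Real.pi * η p.1 p.2))
    (hcos : ∀ p ∈ U, Complex.cos (2 * Real.pi * η p.1 p.2) ≠ 0)
    (hsin : ∀ p ∈ U, Complex.sin (2 * Real.pi * p.1) ≠ 0)
    (hsin' : ∀ p ∈ U, Complex.sin (2 * Real.pi * (p.1 + η p.1 p.2)) ≠ 0) :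
    ∀ p ∈ U,
      ησ p.1 p.2 = Complex.cot (2 * Real.pi * p.1) * Complex.tan (2 * Real.pi * η p.1 p.2) ∧
      ην p.1 p.2 = Complex.tan (2 * Real.pi * η p.1 p.2) / 2 ∧
      ρσ p.1 p.2 = -(Complex.I / 2) * Complex.tan (2 * Real.pi * η p.1 p.2) ∧
      ην p.1 p.2 = Complex.I * ρσ p.1 p.2 ∧
      ρν p.1 p.2 = Complex.sin (2 * Real.pi * p.1) /
        (4 * Complex.I * Complex.cos (2 * Real.pi * η p.1 p.2) *
          Complex.sin (2 * Real.pi * (p.1 + η p.1 p.2))) := by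
  intro p hp
  have hπ : ((Real.pi : ℂ)) ≠ 0 := Complex.ofReal_ne_zero.mpr Real.pi_ne_zero
  have h2π : (2 * (Real.pi : ℂ)) ≠ 0 := mul_ne_zero two_ne_zero hπ
  have hd0 := hcos p hp
  have ha0 := hsin p hp
  have hS0 := hsin' p hp
  have h1 := hrel1 p hp
  have h2 := hrel2 p hp
  have hUσ : ∀ᶠ s in nhds p.1, (s, p.2) ∈ U :=
    (hU.preimage (continuous_id.prodMk continuous_const)).mem_nhds hp
  have hUν : ∀ᶠ n in nhds p.2, (p.1, n) ∈ U :=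
    (hU.preimage (continuous_const.prodMk continuous_id)).mem_nhds hp
  have Dσ1 : HasDerivAt (fun s => Complex.sin (2 * (Real.pi:ℂ) * η s p.2))
      (Complex.cos (2 * (Real.pi:ℂ) * η p.1 p.2) * (2 * (Real.pi:ℂ) * ησ p.1 p.2)) p.1 :=
    (HasDerivAt.const_mul _ (hησ p hp)).csin
  have Dσ1' : HasDerivAt
      (fun s => Complex.exp ((Real.pi:ℂ) * p.2) * Complex.sin (2 * (Real.pi:ℂ) * s))
      (Complex.exp ((Real.pi:ℂ) * p.2) *
        (Complex.cos (2 * (Real.pi:ℂ) * p.1) * (2 * (Real.pi:ℂ) * 1))) p.1 :=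
    HasDerivAt.const_mul _ ((HasDerivAt.const_mul _ (hasDerivAt_id p.1)).csin)
  have hev1σ : (fun s => Complex.sin (2 * (Real.pi:ℂ) * η s p.2)) =ᶠ[nhds p.1]
      (fun s => Complex.exp ((Real.pi:ℂ) * p.2) * Complex.sin (2 * (Real.pi:ℂ) * s)) :=
    hUσ.mono fun s hs => hrel1 (s, p.2) hs
  have eq1σ := (Dσ1.congr_of_eventuallyEq hev1σ.symm).unique Dσ1'
  have Dν1 : HasDerivAt (fun n => Complex.sin (2 * (Real.pi:ℂ) * η p.1 n))
      (Complex.cos (2 * (Real.pi:ℂ) * η p.1 p.2) * (2 * (Real.pi:ℂ) * ην p.1 p.2)) p.2 :=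
    (HasDerivAt.const_mul _ (hην p hp)).csin
  have Dν1' : HasDerivAt
      (fun n => Complex.exp ((Real.pi:ℂ) * n) * Complex.sin (2 * (Real.pi:ℂ) * p.1))
      (Complex.exp ((Real.pi:ℂ) * p.2) * ((Real.pi:ℂ) * 1) *
        Complex.sin (2 * (Real.pi:ℂ) * p.1)) p.2 :=
    ((HasDerivAt.const_mul _ (hasDerivAt_id p.2)).cexp).mul_const _
  have hev1ν : (fun n => Complex.sin (2 * (Real.pi:ℂ) * η p.1 n)) =ᶠ[nhds p.2]
      (fun n => Complex.exp ((Real.pi:ℂ) * n) * Complex.sin (2 * (Real.pi:ℂ) * p.1)) :=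
    hUν.mono fun n hn => hrel1 (p.1, n) hn
  have eq1ν := (Dν1.congr_of_eventuallyEq hev1ν.symm).unique Dν1'
  have Dσ2 : HasDerivAt
      (fun s => Complex.exp (4 * (Real.pi:ℂ) * Complex.I * ρ s p.2) *
        Complex.sin (2 * (Real.pi:ℂ) * (s + η s p.2)))
      (Complex.exp (4 * (Real.pi:ℂ) * Complex.I * ρ p.1 p.2) *
          (4 * (Real.pi:ℂ) * Complex.I * ρσ p.1 p.2) *
          Complex.sin (2 * (Real.pi:ℂ) * (p.1 + η p.1 p.2)) +
        Complex.exp (4 * (Real.pi:ℂ) * Complex.I * ρ p.1 p.2) *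
          (Complex.cos (2 * (Real.pi:ℂ) * (p.1 + η p.1 p.2)) *
            (2 * (Real.pi:ℂ) * (1 + ησ p.1 p.2)))) p.1 :=
    ((HasDerivAt.const_mul _ (hρσ p hp)).cexp).mul
      ((HasDerivAt.const_mul _ ((hasDerivAt_id p.1).add (hησ p hp))).csin)
  have hev2σ : (fun s => Complex.exp (4 * (Real.pi:ℂ) * Complex.I * ρ s p.2) *
      Complex.sin (2 * (Real.pi:ℂ) * (s + η s p.2))) =ᶠ[nhds p.1]
      (fun s => Complex.sin (2 * (Real.pi:ℂ) * η s p.2)) :=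
    hUσ.mono fun s hs => hrel2 (s, p.2) hs
  have eq2σ := (Dσ2.congr_of_eventuallyEq hev2σ.symm).unique Dσ1
  have Dν2 : HasDerivAt
      (fun n => Complex.exp (4 * (Real.pi:ℂ) * Complex.I * ρ p.1 n) *
        Complex.sin (2 * (Real.pi:ℂ) * (p.1 + η p.1 n)))
      (Complex.exp (4 * (Real.pi:ℂ) * Complex.I * ρ p.1 p.2) *
          (4 * (Real.pi:ℂ) * Complex.I * ρν p.1 p.2) *
          Complex.sin (2 * (Real.pi:ℂ) * (p.1 + η p.1 p.2)) +
        Complex.exp (4 * (Real.pi:ℂ) * Complex.I * ρ p.1 p.2) *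
          (Complex.cos (2 * (Real.pi:ℂ) * (p.1 + η p.1 p.2)) *
            (2 * (Real.pi:ℂ) * (0 + ην p.1 p.2)))) p.2 :=
    ((HasDerivAt.const_mul _ (hρν p hp)).cexp).mul
      ((HasDerivAt.const_mul _ ((hasDerivAt_const p.2 p.1).add (hην p hp))).csin)
  have hev2ν : (fun n => Complex.exp (4 * (Real.pi:ℂ) * Complex.I * ρ p.1 n) *
      Complex.sin (2 * (Real.pi:ℂ) * (p.1 + η p.1 n))) =ᶠ[nhds p.2]
      (fun n => Complex.sin (2 * (Real.pi:ℂ) * η p.1 n)) :=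
    hUν.mono fun n hn => hrel2 (p.1, n) hn
  have eq2ν := (Dν2.congr_of_eventuallyEq hev2ν.symm).unique Dν1
  set a := Complex.sin (2 * (Real.pi:ℂ) * p.1) with ha
  set b := Complex.cos (2 * (Real.pi:ℂ) * p.1) with hb
  set c := Complex.sin (2 * (Real.pi:ℂ) * η p.1 p.2) with hc
  set d := Complex.cos (2 * (Real.pi:ℂ) * η p.1 p.2) with hd
  set S := Complex.sin (2 * (Real.pi:ℂ) * (p.1 + η p.1 p.2)) with hS
  set C := Complex.cos (2 * (Real.pi:ℂ) * (p.1 + η p.1 p.2)) with hC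
  have hc0 : c ≠ 0 := by
    rw [h1]; exact mul_ne_zero (Complex.exp_ne_zero _) ha0
  have hSsum : S = a * d + b * c := by
    rw [hS, ha, hb, hc, hd,
      show (2 * (Real.pi:ℂ)) * (p.1 + η p.1 p.2)
        = 2 * (Real.pi:ℂ) * p.1 + 2 * (Real.pi:ℂ) * η p.1 p.2 from by ring,
      Complex.sin_add]
  have hCsum : C = b * d - a * c := by
    rw [hC, ha, hb, hc, hd,
      show (2 * (Real.pi:ℂ)) * (p.1 + η p.1 p.2)
        = 2 * (Real.pi:ℂ) * p.1 + 2 * (Real.pi:ℂ) * η p.1 p.2 from by ring,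
      Complex.cos_add]
  have hpyth : c ^ 2 + d ^ 2 = 1 := by
    rw [hc, hd]; exact Complex.sin_sq_add_cos_sq _
  have hI2 : Complex.I ^ 2 = -1 := Complex.I_sq
  have e1σ : d * ησ p.1 p.2 = Complex.exp ((Real.pi:ℂ) * p.2) * b :=
    mul_left_cancel₀ h2π (by linear_combination eq1σ)
  have eησ : ησ p.1 p.2 * (a * d) = b * c := by linear_combination a * e1σ - b * h1
  have e1ν : 2 * d * ην p.1 p.2 = Complex.exp ((Real.pi:ℂ) * p.2) * a :=
    mul_left_cancel₀ hπ (by linear_combination eq1ν)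
  have eην : 2 * d * ην p.1 p.2 = c := by linear_combination e1ν - h1
  have e2σc : 2 * Complex.I * ρσ p.1 p.2 * c * S + (1 + ησ p.1 p.2) * c * C
      = ησ p.1 p.2 * d * S :=
    mul_left_cancel₀ h2π (by
      linear_combination S * eq2σ -
        (4 * (Real.pi:ℂ) * Complex.I * ρσ p.1 p.2 * S +
          2 * (Real.pi:ℂ) * (1 + ησ p.1 p.2) * C) * h2)
  have e2νc : 2 * Complex.I * ρν p.1 p.2 * c * S + ην p.1 p.2 * c * C
      = ην p.1 p.2 * d * S :=
    mul_left_cancel₀ h2π (by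
      linear_combination S * eq2ν -
        (4 * (Real.pi:ℂ) * Complex.I * ρν p.1 p.2 * S +
          2 * (Real.pi:ℂ) * ην p.1 p.2 * C) * h2)
  have step1 : 2 * Complex.I * ρσ p.1 p.2 * S * a * d + (a * d + b * c) * C = b * d * S :=
    mul_left_cancel₀ hc0 (by linear_combination (a * d) * e2σc + (d * S - c * C) * eησ)
  have step2 : 2 * Complex.I * ρσ p.1 p.2 * a * d + C = b * d :=
    mul_left_cancel₀ hS0 (by linear_combination step1 + C * hSsum)
  have hρ2 : 2 * Complex.I * d * ρσ p.1 p.2 = c :=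
    mul_left_cancel₀ ha0 (by linear_combination step2 - hCsum)
  have stepν1 : 4 * Complex.I * ρν p.1 p.2 * S * d + c * C = d * S :=
    mul_left_cancel₀ hc0 (by linear_combination (2 * d) * e2νc + (d * S - c * C) * eην)
  have stepν2 : 4 * Complex.I * ρν p.1 p.2 * S * d = a := by
    linear_combination stepν1 + d * hSsum - c * hCsum + a * hpyth
  refine ⟨?_, ?_, ?_, ?_, ?_⟩
  · rw [Complex.cot_eq_cos_div_sin, Complex.tan_eq_sin_div_cos, ← ha, ← hb, ← hc, ← hd,
      div_mul_div_comm, eq_div_iff (mul_ne_zero ha0 hd0)]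
    linear_combination eησ
  · rw [Complex.tan_eq_sin_div_cos, ← hc, ← hd]
    field_simp
    linear_combination eην
  · rw [Complex.tan_eq_sin_div_cos, ← hc, ← hd]
    field_simp
    linear_combination (-Complex.I) * hρ2 + (2 * d * ρσ p.1 p.2) * hI2
  · exact mul_left_cancel₀ (mul_ne_zero two_ne_zero hd0) (by linear_combination eην - hρ2)
  · rw [eq_div_iff (mul_ne_zero (mul_ne_zero
      (mul_ne_zero (by norm_num : (4:ℂ) ≠ 0) Complex.I_ne_zero) hd0) hS0)]
    linear_combination stepν2
end

section
/- Let σ, η, ν, ρ ∈ ℂ satisfy sin(2πσ) ≠ 0, sin(2π(σ+η)) ≠ 0, e^{πν} sin(2πσ) = sin(2πη), and e^{4πiρ} sin(2π(σ+η)) = sin(2πη). Then the two identities 2 cos π(σ+η+iν/2) = e^{iπ(σ−η−iν/2−4ρ)} and 2 cos π(σ+η−iν/2) = e^{iπ(−σ+η−iν/2−4ρ)} hold. -/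
/-- Given the monodromy relations `e^{πν} sin 2πσ = sin 2πη` and
`e^{4πiρ} sin 2π(σ+η) = sin 2πη`, the identities
`2 cos π(σ+η±iν/2) = e^{iπ(±σ∓η−iν/2−4ρ)}` hold. -/
theorem cos_identities (σ η ν ρ : ℂ)
    (hσ : Complex.sin (2 * Real.pi * σ) ≠ 0)
    (hση : Complex.sin (2 * Real.pi * (σ + η)) ≠ 0)
    (hrel1 : Complex.exp (Real.pi * ν) * Complex.sin (2 * Real.pi * σ) =
      Complex.sin (2 * Real.pi * η))
    (hrel2 : Complex.exp (4 * Real.pi * Complex.I * ρ) *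
      Complex.sin (2 * Real.pi * (σ + η)) = Complex.sin (2 * Real.pi * η)) :
    2 * Complex.cos (Real.pi * (σ + η + Complex.I * ν / 2)) =
      Complex.exp (Complex.I * Real.pi * (σ - η - Complex.I * ν / 2 - 4 * ρ)) ∧
    2 * Complex.cos (Real.pi * (σ + η - Complex.I * ν / 2)) =
      Complex.exp (Complex.I * Real.pi * (-σ + η - Complex.I * ν / 2 - 4 * ρ)) := by
  set a := Complex.exp (Real.pi * Complex.I * σ) with ha_def
  set b := Complex.exp (Real.pi * Complex.I * η) with hb_def
  set r := Complex.exp (Real.pi * ν / 2) with hr_def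
  set f := Complex.exp (Real.pi * Complex.I * ρ) with hf_def
  have ha : a ≠ 0 := Complex.exp_ne_zero _
  have hb : b ≠ 0 := Complex.exp_ne_zero _
  have hr : r ≠ 0 := Complex.exp_ne_zero _
  have hf : f ≠ 0 := Complex.exp_ne_zero _
  have hf4 : f ^ 4 ≠ 0 := pow_ne_zero _ hf
  have hI : (Complex.I : ℂ) ≠ 0 := Complex.I_ne_zero
  have exp_pow : ∀ (z : ℂ) (n : ℕ), (Complex.exp z) ^ n = Complex.exp (n * z) :=
    fun z n => (Complex.exp_nat_mul z n).symm
  have sσ : Complex.sin (2 * (Real.pi:ℂ) * σ) = ((a^2)⁻¹ - a^2) * Complex.I / 2 := by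
    rw [Complex.sin, exp_pow, ← Complex.exp_neg]
    congr 3
    · push_cast; ring
    · push_cast; ring
  have sη : Complex.sin (2 * (Real.pi:ℂ) * η) = ((b^2)⁻¹ - b^2) * Complex.I / 2 := by
    rw [Complex.sin, exp_pow, ← Complex.exp_neg]
    congr 3
    · push_cast; ring
    · push_cast; ring
  have sση : Complex.sin (2 * (Real.pi:ℂ) * (σ + η)) =
      (((a*b)^2)⁻¹ - (a*b)^2) * Complex.I / 2 := by
    rw [Complex.sin, mul_pow, exp_pow, exp_pow, ← Complex.exp_add, ← Complex.exp_neg]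
    congr 3
    · push_cast; ring
    · push_cast; ring
  have er : Complex.exp ((Real.pi:ℂ) * ν) = r^2 := by
    rw [exp_pow]; congr 1; push_cast; ring
  have ef : Complex.exp (4 * (Real.pi:ℂ) * Complex.I * ρ) = f^4 := by
    rw [exp_pow]; congr 1; push_cast; ring
  rw [sσ] at hσ hrel1
  rw [sση] at hση hrel2
  rw [sη, er] at hrel1
  rw [sη, ef] at hrel2
  have hA : 1 - a^4 ≠ 0 := by
    intro h
    apply hσ
    have : (a^2)⁻¹ - a^2 = (a^2)⁻¹ * (1 - a^4) := by field_simp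
    rw [this, h, mul_zero, zero_mul, zero_div]
  have hAB : 1 - (a*b)^4 ≠ 0 := by
    intro h
    apply hση
    have : ((a*b)^2)⁻¹ - (a*b)^2 = ((a*b)^2)⁻¹ * (1 - (a*b)^4) := by field_simp
    rw [this, h, mul_zero, zero_mul, zero_div]
  have h1' : r^2 * ((a^2)⁻¹ - a^2) = (b^2)⁻¹ - b^2 := by
    apply mul_right_cancel₀ (div_ne_zero hI two_ne_zero)
    linear_combination hrel1
  have h2' : f^4 * (((a*b)^2)⁻¹ - (a*b)^2) = (b^2)⁻¹ - b^2 := by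
    apply mul_right_cancel₀ (div_ne_zero hI two_ne_zero)
    linear_combination hrel2
  have H1 : r^2 * (1 - a^4) * b^2 = a^2 * (1 - b^4) := by
    field_simp at h1'
    linear_combination h1'
  have H2 : f^4 * (1 - a^4*b^4) = a^2 * (1 - b^4) := by
    field_simp at h2'
    apply mul_right_cancel₀ (pow_ne_zero 2 hb)
    linear_combination b^2 * h2'
  have key1 : f^4 * (a^2*b^2 + r^2) = a^2 * r^2 := by
    apply mul_left_cancel₀ (mul_ne_zero (pow_ne_zero 2 hb) hA)
    linear_combination (f^4 - a^2) * H1 + a^2 * H2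
  have key2 : f^4 * (a^2*b^2*r^2 + 1) = b^2 * r^2 := by
    apply mul_left_cancel₀ (mul_ne_zero (pow_ne_zero 2 hb) hA)
    linear_combination (f^4*a^2*b^2 - b^2) * H1 + b^2 * H2
  constructor
  · have g1 : Complex.exp (((Real.pi:ℂ) * (σ + η + Complex.I * ν / 2)) * Complex.I) =
        a * b * r⁻¹ := by
      rw [show ((Real.pi:ℂ) * (σ + η + Complex.I * ν / 2)) * Complex.I =
          (Real.pi:ℂ) * Complex.I * σ + ((Real.pi:ℂ) * Complex.I * η +
            -((Real.pi:ℂ) * ν / 2)) from by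
          linear_combination ((Real.pi:ℂ) * ν / 2) * Complex.I_mul_I,
        Complex.exp_add, Complex.exp_add, Complex.exp_neg]
      rw [← ha_def, ← hb_def, ← hr_def]
      ring
    have g2 : Complex.exp ((-((Real.pi:ℂ) * (σ + η + Complex.I * ν / 2))) * Complex.I) =
        a⁻¹ * b⁻¹ * r := by
      rw [show (-((Real.pi:ℂ) * (σ + η + Complex.I * ν / 2))) * Complex.I =
          -((Real.pi:ℂ) * Complex.I * σ) + (-((Real.pi:ℂ) * Complex.I * η) +
            (Real.pi:ℂ) * ν / 2) from by
          linear_combination (-(Real.pi:ℂ) * ν / 2) * Complex.I_mul_I,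
        Complex.exp_add, Complex.exp_add, Complex.exp_neg, Complex.exp_neg]
      rw [← ha_def, ← hb_def, ← hr_def]
      ring
    have e1 : Complex.exp (Complex.I * (Real.pi:ℂ) * (σ - η - Complex.I * ν / 2 - 4 * ρ)) =
        a * b⁻¹ * r * (f^4)⁻¹ := by
      rw [show Complex.I * (Real.pi:ℂ) * (σ - η - Complex.I * ν / 2 - 4 * ρ) =
          (Real.pi:ℂ) * Complex.I * σ + (-((Real.pi:ℂ) * Complex.I * η) +
            ((Real.pi:ℂ) * ν / 2 + -(4 * ((Real.pi:ℂ) * Complex.I * ρ)))) from by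
          linear_combination (-(Real.pi:ℂ) * ν / 2) * Complex.I_mul_I,
        Complex.exp_add, Complex.exp_add, Complex.exp_add, Complex.exp_neg,
        Complex.exp_neg]
      rw [← ha_def, ← hb_def, ← hr_def,
        show (4:ℂ) * ((Real.pi:ℂ) * Complex.I * ρ) =
          ((4:ℕ):ℂ) * ((Real.pi:ℂ) * Complex.I * ρ) from by norm_num,
        ← exp_pow, ← hf_def]
      ring
    rw [Complex.cos, g1, g2, e1]
    field_simp
    linear_combination key1
  · have g1 : Complex.exp (((Real.pi:ℂ) * (σ + η - Complex.I * ν / 2)) * Complex.I) =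
        a * b * r := by
      rw [show ((Real.pi:ℂ) * (σ + η - Complex.I * ν / 2)) * Complex.I =
          (Real.pi:ℂ) * Complex.I * σ + ((Real.pi:ℂ) * Complex.I * η +
            (Real.pi:ℂ) * ν / 2) from by
          linear_combination (-(Real.pi:ℂ) * ν / 2) * Complex.I_mul_I,
        Complex.exp_add, Complex.exp_add]
      rw [← ha_def, ← hb_def, ← hr_def]
      ring
    have g2 : Complex.exp ((-((Real.pi:ℂ) * (σ + η - Complex.I * ν / 2))) * Complex.I) =
        a⁻¹ * b⁻¹ * r⁻¹ := by
      rw [show (-((Real.pi:ℂ) * (σ + η - Complex.I * ν / 2))) * Complex.I =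
          -((Real.pi:ℂ) * Complex.I * σ) + (-((Real.pi:ℂ) * Complex.I * η) +
            -((Real.pi:ℂ) * ν / 2)) from by
          linear_combination ((Real.pi:ℂ) * ν / 2) * Complex.I_mul_I,
        Complex.exp_add, Complex.exp_add, Complex.exp_neg, Complex.exp_neg,
        Complex.exp_neg]
      rw [← ha_def, ← hb_def, ← hr_def]
      ring
    have e2 : Complex.exp (Complex.I * (Real.pi:ℂ) * (-σ + η - Complex.I * ν / 2 - 4 * ρ)) =
        a⁻¹ * b * r * (f^4)⁻¹ := by
      rw [show Complex.I * (Real.pi:ℂ) * (-σ + η - Complex.I * ν / 2 - 4 * ρ) =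
          -((Real.pi:ℂ) * Complex.I * σ) + ((Real.pi:ℂ) * Complex.I * η +
            ((Real.pi:ℂ) * ν / 2 + -(4 * ((Real.pi:ℂ) * Complex.I * ρ)))) from by
          linear_combination (-(Real.pi:ℂ) * ν / 2) * Complex.I_mul_I,
        Complex.exp_add, Complex.exp_add, Complex.exp_add, Complex.exp_neg,
        Complex.exp_neg]
      rw [← ha_def, ← hb_def, ← hr_def,
        show (4:ℂ) * ((Real.pi:ℂ) * Complex.I * ρ) =
          ((4:ℕ):ℂ) * ((Real.pi:ℂ) * Complex.I * ρ) from by norm_num,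
        ← exp_pow, ← hf_def]
      ring
    rw [Complex.cos, g1, g2, e2]
    field_simp
    linear_combination key2
end

section
/- Let σ, η, ν be real with 0 < η < σ < 1/4 and ν < 0, satisfying e^{πν} sin(2πσ) = sin(2πη). Then Log(1 + e^{2πi(σ+η−iν/2)}) − Log(1 + e^{−2πi(σ+η+iν/2)}) = 4πiη, where Log denotes the principal branch of the complex logarithm. -/
/-- For real `0 < η < σ < 1/4` and `ν < 0` with `e^{πν} sin 2πσ = sin 2πη`, one has
`Log(1 + e^{2πi(σ+η−iν/2)}) − Log(1 + e^{−2πi(σ+η+iν/2)}) = 4πiη` (principal branch). -/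
theorem log_difference_identity (σ η ν : ℝ)
    (hη : 0 < η) (hησ : η < σ) (hσ : σ < 1 / 4) (hν : ν < 0)
    (hrel : Real.exp (Real.pi * ν) * Real.sin (2 * Real.pi * σ) =
      Real.sin (2 * Real.pi * η)) :
    Complex.log (1 + Complex.exp (2 * Real.pi * Complex.I *
        ((σ : ℂ) + (η : ℂ) - Complex.I * (ν : ℂ) / 2))) -
      Complex.log (1 + Complex.exp (-(2 * Real.pi * Complex.I *
        ((σ : ℂ) + (η : ℂ) + Complex.I * (ν : ℂ) / 2)))) =
      4 * Real.pi * Complex.I * (η : ℂ) := by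
  have hπ := Real.pi_pos
  set r : ℝ := Real.exp (Real.pi * ν) with hrdef
  have hr0 : 0 < r := Real.exp_pos _
  have hr1 : r < 1 := by
    rw [hrdef, Real.exp_lt_one_iff]
    nlinarith
  set θ : ℝ := 2 * Real.pi * (σ + η) with hθdef
  -- bounds on 2πη
  have hη2 : 0 < 2 * Real.pi * η := by positivity
  have hη3 : 2 * Real.pi * η < Real.pi / 2 := by nlinarith
  have hcos : 0 < Real.cos (2 * Real.pi * η) :=
    Real.cos_pos_of_mem_Ioo ⟨by nlinarith, hη3⟩
  have hre : 0 < 1 + r * Real.cos θ := by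
    nlinarith [Real.neg_one_le_cos θ]
  have hkey : r * Real.sin θ * Real.cos (2 * Real.pi * η)
      - (1 + r * Real.cos θ) * Real.sin (2 * Real.pi * η) = 0 := by
    have h1 : θ - 2 * Real.pi * η = 2 * Real.pi * σ := by rw [hθdef]; ring
    have h2 := Real.sin_sub θ (2 * Real.pi * η)
    rw [h1] at h2
    linear_combination hrel - r * h2
  set ρ : ℝ := (1 + r * Real.cos θ) / Real.cos (2 * Real.pi * η) with hρdef
  have hρ0 : 0 < ρ := by positivity
  -- exponent computations
  have he1 : (2 * Real.pi * Complex.I * ((σ : ℂ) + (η : ℂ) - Complex.I * (ν : ℂ) / 2))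
      = (Real.pi * ν : ℝ) + (θ : ℝ) * Complex.I := by
    rw [hθdef]
    push_cast
    linear_combination (-(Real.pi : ℂ) * ν) * Complex.I_mul_I
  have he2 : (-(2 * Real.pi * Complex.I * ((σ : ℂ) + (η : ℂ) + Complex.I * (ν : ℂ) / 2)))
      = (Real.pi * ν : ℝ) + (-θ : ℝ) * Complex.I := by
    rw [hθdef]
    push_cast
    linear_combination (-(Real.pi : ℂ) * ν) * Complex.I_mul_I
  have hz1 : (1 : ℂ) + Complex.exp ((Real.pi * ν : ℝ) + (θ : ℝ) * Complex.I)
      = Complex.exp ((Real.log ρ : ℝ) + (2 * Real.pi * η : ℝ) * Complex.I) := by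
    rw [Complex.exp_add, Complex.exp_add, ← Complex.ofReal_exp, ← Complex.ofReal_exp,
      Real.exp_log hρ0, Complex.exp_mul_I, Complex.exp_mul_I,
      ← Complex.ofReal_cos, ← Complex.ofReal_sin, ← Complex.ofReal_cos, ← Complex.ofReal_sin]
    rw [Complex.ext_iff]
    constructor
    · simp only [Complex.add_re, Complex.one_re, Complex.mul_re, Complex.ofReal_re,
        Complex.ofReal_im, Complex.add_im, Complex.mul_im, Complex.I_re, Complex.I_im,
        Complex.add_re, Complex.one_im]
      rw [hρdef, ← hrdef]
      norm_num
      field_simp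
    · simp only [Complex.add_im, Complex.one_im, Complex.mul_im, Complex.ofReal_re,
        Complex.ofReal_im, Complex.add_re, Complex.mul_re, Complex.I_re, Complex.I_im]
      rw [hρdef, ← hrdef]
      norm_num
      field_simp
      linarith [hkey]
  have hz2 : (1 : ℂ) + Complex.exp ((Real.pi * ν : ℝ) + (-θ : ℝ) * Complex.I)
      = Complex.exp ((Real.log ρ : ℝ) + (-(2 * Real.pi * η) : ℝ) * Complex.I) := by
    rw [Complex.exp_add, Complex.exp_add, ← Complex.ofReal_exp, ← Complex.ofReal_exp,
      Real.exp_log hρ0, Complex.exp_mul_I, Complex.exp_mul_I,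
      ← Complex.ofReal_cos, ← Complex.ofReal_sin, ← Complex.ofReal_cos, ← Complex.ofReal_sin]
    rw [Real.cos_neg, Real.sin_neg, Real.cos_neg, Real.sin_neg]
    rw [Complex.ext_iff]
    constructor
    · simp only [Complex.add_re, Complex.one_re, Complex.mul_re, Complex.ofReal_re,
        Complex.ofReal_im, Complex.add_im, Complex.mul_im, Complex.I_re, Complex.I_im,
        Complex.one_im]
      rw [hρdef, ← hrdef]
      norm_num
      field_simp
    · simp only [Complex.add_im, Complex.one_im, Complex.mul_im, Complex.ofReal_re,
        Complex.ofReal_im, Complex.add_re, Complex.mul_re, Complex.I_re, Complex.I_im]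
      rw [hρdef, ← hrdef]
      norm_num
      field_simp
      linarith [hkey]
  have hπle : 2 * Real.pi * η ≤ Real.pi := by nlinarith
  have hl1 : Complex.log ((1 : ℂ) + Complex.exp ((Real.pi * ν : ℝ) + (θ : ℝ) * Complex.I))
      = (Real.log ρ : ℝ) + (2 * Real.pi * η : ℝ) * Complex.I := by
    rw [hz1, Complex.log_exp] <;>
      simp only [Complex.add_im, Complex.ofReal_im, Complex.mul_im, Complex.ofReal_re,
        Complex.I_im, Complex.I_re]
    · linarith
    · linarith
  have hl2 : Complex.log ((1 : ℂ) + Complex.exp ((Real.pi * ν : ℝ) + (-θ : ℝ) * Complex.I))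
      = (Real.log ρ : ℝ) + (-(2 * Real.pi * η) : ℝ) * Complex.I := by
    rw [hz2, Complex.log_exp] <;>
      simp only [Complex.add_im, Complex.ofReal_im, Complex.mul_im, Complex.ofReal_re,
        Complex.I_im, Complex.I_re]
    · linarith
    · linarith
  rw [he1, he2, hl1, hl2]
  push_cast
  ring
end
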